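/- arXiv:2005.04478 — 6 statements merged into one kernel-verified Lean document; each statement's English description precedes it below -/
import Mathlib

section
/- Assume R is not small. Then the rank of Γ is at most ⌊#R/2⌋ + 1. -/
open Finset TensorProduct

private lemma add_closure_top {G : Type} [CommGroup G] (s : Set G)
    (h : Subgroup.closure s = ⊤) :
    AddSubgroup.closure (⇑Additive.ofMul '' s) = (⊤ : AddSubgroup (Additive G)) := by
  rw [AddSubgroup.eq_top_iff']
  intro x
  have hx : Additive.toMul x ∈ Subgroup.closure s := h ▸ Subgroup.mem_top _
  exact Subgroup.closure_induction
    (p := fun g _ => Additive.ofMul g ∈ AddSubgroup.closure (⇑Additive.ofMul '' s))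
    (fun g hg => AddSubgroup.subset_closure ⟨g, hg, rfl⟩)
    (AddSubgroup.zero_mem _)
    (fun a b _ _ ha hb => AddSubgroup.add_mem _ ha hb)
    (fun a _ ha => AddSubgroup.neg_mem _ ha) hx

private lemma aux_rank {G : Type} [CommGroup G] (H : Subgroup G) (s : Set ↥H)
    (hs : Subgroup.closure s = ⊤) :
    Module.rank ℚ (ℚ ⊗[ℤ] Additive ↥H) ≤ Cardinal.mk s := by
  have h1 : AddSubgroup.closure (⇑Additive.ofMul '' s) = (⊤ : AddSubgroup (Additive ↥H)) :=
    add_closure_top s hs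
  have h2 : Submodule.span ℤ (⇑Additive.ofMul '' s) = (⊤ : Submodule ℤ (Additive ↥H)) := by
    have h3 := Submodule.span_int_eq_addSubgroupClosure (M := Additive ↥H)
      (⇑Additive.ofMul '' s)
    rw [h1] at h3
    rw [Submodule.eq_top_iff']
    intro x
    have : x ∈ (Submodule.span ℤ (⇑Additive.ofMul '' s)).toAddSubgroup := by
      rw [h3]; exact AddSubgroup.mem_top x
    exact this
  have h3 : Submodule.span ℚ
      (⇑(TensorProduct.mk ℤ ℚ (Additive ↥H) 1) '' (⇑Additive.ofMul '' s)) = ⊤ := by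
    rw [← Submodule.baseChange_span, h2, Submodule.baseChange_top]
  calc Module.rank ℚ (ℚ ⊗[ℤ] Additive ↥H)
      = Module.rank ℚ (⊤ : Submodule ℚ (ℚ ⊗[ℤ] Additive ↥H)) := (rank_top ℚ _).symm
    _ = Module.rank ℚ (Submodule.span ℚ
          (⇑(TensorProduct.mk ℤ ℚ (Additive ↥H) 1) '' (⇑Additive.ofMul '' s))) := by rw [h3]
    _ ≤ Cardinal.mk
          (⇑(TensorProduct.mk ℤ ℚ (Additive ↥H) 1) '' (⇑Additive.ofMul '' s)) :=
        rank_span_le _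
    _ ≤ Cardinal.mk (⇑Additive.ofMul '' s) := Cardinal.mk_image_le
    _ ≤ Cardinal.mk s := Cardinal.mk_image_le

/-- Assume `R` is not small. Then the rank of the subgroup `Γ ≤ ℂˣ`
generated by `R` (rank meaning `dim_ℚ (Γ ⊗_ℤ ℚ)`) is at most `⌊#R/2⌋ + 1`. -/
theorem stmt_4 (q : ℤ) (hq : 2 ≤ q) (R : Finset ℂ) (hRne : R.Nonempty)
    (hR0 : ∀ α ∈ R, α ≠ 0)
    (habs : ∀ α ∈ R, ‖α‖ ^ 2 = (q : ℝ))
    (hconj : ∀ α ∈ R, (q : ℂ) / α ∈ R)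
    (hnotsmall : ∀ α₁ ∈ R, ∀ α₂ ∈ R, α₁ ≠ α₂ → ∀ n : ℕ, 0 < n → (α₁ / α₂) ^ n ≠ 1) :
    Module.rank ℚ
        (ℚ ⊗[ℤ] Additive ↥(Subgroup.closure {x : ℂˣ | (x : ℂ) ∈ R})) ≤
      ((R.card / 2 + 1 : ℕ) : Cardinal) := by
  classical
  have hq0 : (q : ℂ) ≠ 0 := by
    have : q ≠ 0 := by omega
    exact_mod_cast this
  set σ : ℂ → ℂ := fun α => (q : ℂ) / α with hσdef
  have hσR : ∀ α ∈ R, σ α ∈ R := hconj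
  have hσ0 : ∀ α ∈ R, σ α ≠ 0 := fun α hα => hR0 _ (hσR α hα)
  have hσσ : ∀ α ∈ R, σ (σ α) = α := by
    intro α hα
    have h0 := hR0 α hα
    simp only [hσdef]
    field_simp
  have hqmul : ∀ α ∈ R, α * σ α = (q : ℂ) := by
    intro α hα
    have h0 := hR0 α hα
    simp only [hσdef]
    field_simp
  -- the key function: an injective map to a linear order
  set key : ℂ → ℝ ×ₗ ℝ := fun z => toLex (z.re, z.im) with hkeydef
  have hkeyinj : Function.Injective key := by
    intro a b hab
    have : (a.re, a.im) = (b.re, b.im) := hab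
    exact Complex.ext (congrArg Prod.fst this) (congrArg Prod.snd this)
  set T : Finset ℂ := R.filter (fun α => key α ≤ key (σ α)) with hTdef
  set T' : Finset ℂ := R.filter (fun α => ¬ key α ≤ key (σ α)) with hT'def
  set F : Finset ℂ := R.filter (fun α => α ^ 2 = (q : ℂ)) with hFdef
  have hTR : T ⊆ R := Finset.filter_subset _ _
  have hfix : ∀ α ∈ R, α ^ 2 = (q : ℂ) → σ α = α := by
    intro α hα h2
    have h0 := hR0 α hα
    simp only [hσdef]
    field_simp
    rw [← h2]
  have hFT : F ⊆ T := by
    intro α hα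
    rw [hFdef, Finset.mem_filter] at hα
    rw [hTdef, Finset.mem_filter]
    exact ⟨hα.1, by rw [hfix α hα.1 hα.2]⟩
  have hFcard : F.card ≤ 1 := by
    rw [Finset.card_le_one]
    intro a ha b hb
    rw [hFdef, Finset.mem_filter] at ha hb
    by_contra hne
    refine hnotsmall a ha.1 b hb.1 hne 2 (by norm_num) ?_
    have hb0 := hR0 b hb.1
    rw [div_pow, ha.2, hb.2, div_self hq0]
  have hTT' : T.card + T'.card = R.card :=
    Finset.card_filter_add_card_filter_not _
  have hcount : T.card - F.card ≤ T'.card := by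
    rw [← Finset.card_sdiff_of_subset hFT]
    refine Finset.card_le_card_of_injOn σ ?_ ?_
    · intro α hα
      rw [Finset.mem_coe, Finset.mem_sdiff] at hα
      obtain ⟨hαT, hαF⟩ := hα
      rw [hTdef, Finset.mem_filter] at hαT
      obtain ⟨hαR, hle⟩ := hαT
      rw [hT'def, Finset.mem_coe, Finset.mem_filter]
      refine ⟨hσR α hαR, ?_⟩
      rw [hσσ α hαR]
      intro hle'
      have heq : key α = key (σ α) := le_antisymm hle hle'
      have heq2 : α = σ α := hkeyinj heq
      apply hαF
      rw [hFdef, Finset.mem_filter]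
      refine ⟨hαR, ?_⟩
      have := hqmul α hαR
      rw [← heq2] at this
      rw [← this]; ring
    · intro a ha b hb hab
      rw [Finset.coe_sdiff, Set.mem_diff] at ha hb
      have haR := hTR ha.1
      have hbR := hTR hb.1
      calc a = σ (σ a) := (hσσ a haR).symm
        _ = σ (σ b) := by rw [hab]
        _ = b := hσσ b hbR
  -- construct the unit-valued embedding
  set e : ℂ → ℂˣ := fun α => if h : α = 0 then 1 else Units.mk0 α h with hedef
  have he : ∀ {α : ℂ}, α ≠ 0 → ((e α : ℂˣ) : ℂ) = α := by
    intro α h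
    simp [hedef, h]
  have hmain : ∃ G : Finset ℂˣ, G.card ≤ R.card / 2 + 1 ∧
      Subgroup.closure (↑G : Set ℂˣ) = Subgroup.closure {x : ℂˣ | (x : ℂ) ∈ R} := by
    -- shared direction : if T's units are in G, and e q in closure G, then R-closure ≤ G-closure
    have hdir : ∀ G : Finset ℂˣ, (∀ α ∈ T, e α ∈ G) →
        e (q : ℂ) ∈ Subgroup.closure (↑G : Set ℂˣ) →
        Subgroup.closure {x : ℂˣ | (x : ℂ) ∈ R} ≤ Subgroup.closure (↑G : Set ℂˣ) := by
      intro G hTG hqG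
      rw [Subgroup.closure_le]
      intro x hx
      simp only [Set.mem_setOf_eq] at hx
      by_cases hxT : (x : ℂ) ∈ T
      · have hex : e (x : ℂ) = x := Units.ext (he (hR0 _ hx))
        have : e (x : ℂ) ∈ Subgroup.closure (↑G : Set ℂˣ) :=
          Subgroup.subset_closure (hTG _ hxT)
        rwa [hex] at this
      · have hσT : σ (x : ℂ) ∈ T := by
          rw [hTdef, Finset.mem_filter]
          refine ⟨hσR _ hx, ?_⟩
          rw [hσσ _ hx]
          rw [hTdef, Finset.mem_filter] at hxT
          exact le_of_not_ge (fun h => hxT ⟨hx, h⟩)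
        have hσ0' : σ (x : ℂ) ≠ 0 := hσ0 _ hx
        have hx' : x = e (q : ℂ) * (e (σ (x : ℂ)))⁻¹ := by
          refine Units.ext ?_
          rw [Units.val_mul]
          rw [he hq0]
          rw [Units.val_inv_eq_inv_val, he hσ0']
          have h0 := hR0 _ hx
          simp only [hσdef]
          field_simp
        rw [hx']
        exact mul_mem hqG (inv_mem (Subgroup.subset_closure (hTG _ hσT)))
    -- reverse : image of T is inside closure of R-units
    have hTinS : ∀ α ∈ T, e α ∈ {x : ℂˣ | (x : ℂ) ∈ R} := by
      intro α hα
      have hαR := hTR hα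
      simp only [Set.mem_setOf_eq, he (hR0 _ hαR)]
      exact hαR
    have heqS : ∀ α ∈ R, e (q : ℂ) = e α * e (σ α) := by
      intro α hα
      refine Units.ext ?_
      rw [Units.val_mul, he hq0, he (hR0 _ hα), he (hσ0 _ hα)]
      exact (hqmul α hα).symm
    have hqclos : e (q : ℂ) ∈ Subgroup.closure {x : ℂˣ | (x : ℂ) ∈ R} := by
      obtain ⟨α, hα⟩ := hRne
      rw [heqS α hα]
      refine mul_mem (Subgroup.subset_closure ?_) (Subgroup.subset_closure ?_)
      · simp only [Set.mem_setOf_eq, he (hR0 _ hα)]; exact hα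
      · simp only [Set.mem_setOf_eq, he (hσ0 _ hα)]; exact hσR _ hα
    by_cases hF : F.Nonempty
    · obtain ⟨γ, hγ⟩ := hF
      have hγ' := hγ
      rw [hFdef, Finset.mem_filter] at hγ'
      refine ⟨T.image e, ?_, ?_⟩
      · have h1 : 1 ≤ F.card := Finset.card_pos.mpr ⟨γ, hγ⟩
        have h2 := Finset.card_image_le (f := e) (s := T)
        omega
      · refine le_antisymm ?_ (hdir _ (fun α hα => Finset.mem_image_of_mem e hα) ?_)
        · rw [Subgroup.closure_le]
          intro g hg
          simp only [Finset.coe_image, Set.mem_image, Finset.mem_coe] at hg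
          obtain ⟨α, hα, rfl⟩ := hg
          exact Subgroup.subset_closure (hTinS α hα)
        · have hγT : γ ∈ T := hFT hγ
          have : e (q : ℂ) = e γ * e γ := by
            refine Units.ext ?_
            rw [Units.val_mul, he hq0, he (hR0 _ hγ'.1)]
            rw [← hγ'.2]; ring
          rw [this]
          exact mul_mem (Subgroup.subset_closure (Finset.mem_image_of_mem e hγT))
            (Subgroup.subset_closure (Finset.mem_image_of_mem e hγT))
    · have hF0 : F.card = 0 := by
        rw [Finset.card_eq_zero, ← Finset.not_nonempty_iff_eq_empty]
        exact hF
      refine ⟨insert (e (q : ℂ)) (T.image e), ?_, ?_⟩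
      · have h2 := Finset.card_image_le (f := e) (s := T)
        have h3 := Finset.card_insert_le (e (q : ℂ)) (T.image e)
        omega
      · refine le_antisymm ?_ (hdir _
          (fun α hα => Finset.mem_insert_of_mem (Finset.mem_image_of_mem e hα))
          (Subgroup.subset_closure (Finset.mem_insert_self _ _))) 
        rw [Subgroup.closure_le]
        intro g hg
        simp only [Finset.coe_insert, Set.mem_insert_iff, Finset.coe_image,
          Set.mem_image, Finset.mem_coe] at hg
        rcases hg with rfl | ⟨α, hα, rfl⟩
        · exact hqclos
        · exact Subgroup.subset_closure (hTinS α hα)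
  obtain ⟨G, hGcard, hGeq⟩ := hmain
  rw [← hGeq]
  refine le_trans (aux_rank _ _ Subgroup.closure_closure_coe_preimage) ?_
  calc Cardinal.mk ((Subtype.val : ↥(Subgroup.closure (↑G : Set ℂˣ)) → ℂˣ) ⁻¹' ↑G)
      ≤ Cardinal.mk (↑G : Set ℂˣ) :=
        Cardinal.mk_preimage_of_injective _ _ Subtype.val_injective
    _ = (G.card : Cardinal) := Cardinal.mk_coe_finset
    _ ≤ ((R.card / 2 + 1 : ℕ) : Cardinal) := by exact_mod_cast hGcard
end

section
/- Let e : R → ℤ be a nontrivial admissible function, and define e₀ : R → ℤ by e₀(α) = e(α) for α ∈ R∖R^ι and e₀(β) = 0 for β ∈ R^ι. Then e₀ is nontrivial, and for every nonzero even integer m the function m·e₀ is a nontrivial admissible function whose weight satisfies wt(m·e₀) = |m|·wt(e₀) ≤ |m|·wt(e). -/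
open Finset

private lemma zpow_sum_aux {x : ℂ} (hx : x ≠ 0) {ι : Type*} (s : Finset ι) (n : ι → ℤ) :
    x ^ (∑ i ∈ s, n i) = ∏ i ∈ s, x ^ n i := by
  classical
  induction s using Finset.cons_induction with
  | empty => simp
  | cons a s ha ih => rw [Finset.sum_cons, Finset.prod_cons, zpow_add₀ hx, ih]

/-- Let `e : R → ℤ` be a nontrivial admissible function and let
`e₀` agree with `e` on `R ∖ R^ι` and vanish on `R^ι = {β ∈ R | β² = q}`. Then `e₀` is
nontrivial, and for every nonzero even integer `m` the function `m • e₀` is a nontrivial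
admissible function whose weight satisfies `wt(m • e₀) = |m| · wt(e₀) ≤ |m| · wt(e)`. -/
theorem stmt_7 (q : ℤ) (hq : 2 ≤ q) (R : Finset ℂ) (hRne : R.Nonempty)
    (hR0 : ∀ α ∈ R, α ≠ 0)
    (habs : ∀ α ∈ R, ‖α‖ ^ 2 = (q : ℝ))
    (hconj : ∀ α ∈ R, (q : ℂ) / α ∈ R)
    (e : ℂ → ℤ)
    (hadm : ∃ d : ℤ, ∏ α ∈ R, α ^ e α = (q : ℂ) ^ d)
    (hnontriv : ¬ ((∀ α ∈ R, e α = e ((q : ℂ) / α)) ∧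
      ∀ β ∈ R, β ^ 2 = (q : ℂ) → Even (e β)))
    (e₀ : ℂ → ℤ)
    (he₀ : ∀ α ∈ R, e₀ α = if α ^ 2 = (q : ℂ) then 0 else e α) :
    (¬ ((∀ α ∈ R, e₀ α = e₀ ((q : ℂ) / α)) ∧
        ∀ β ∈ R, β ^ 2 = (q : ℂ) → Even (e₀ β))) ∧
      ∀ m : ℤ, m ≠ 0 → Even m →
        (∃ d : ℤ, ∏ α ∈ R, α ^ (m * e₀ α) = (q : ℂ) ^ d) ∧
          (¬ ((∀ α ∈ R, m * e₀ α = m * e₀ ((q : ℂ) / α)) ∧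
            ∀ β ∈ R, β ^ 2 = (q : ℂ) → Even (m * e₀ β))) ∧
          (∑ α ∈ R, |m * e₀ α|) = |m| * ∑ α ∈ R, |e₀ α| ∧
          |m| * (∑ α ∈ R, |e₀ α|) ≤ |m| * ∑ α ∈ R, |e α| := by
  classical
  obtain ⟨d, hd⟩ := hadm
  have hq0 : (0 : ℤ) < q := by omega
  have hqR : (0 : ℝ) < (q : ℝ) := by exact_mod_cast hq0
  have hqC : (q : ℂ) ≠ 0 := by
    simpa using (Int.cast_ne_zero (α := ℂ)).mpr hq0.ne'
  -- complex conjugation is α ↦ q/α on R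
  have hconj_eq : ∀ α ∈ R, (starRingEnd ℂ) α = (q : ℂ) / α := by
    intro α hα
    have h0 := hR0 α hα
    have hm : α * (starRingEnd ℂ) α = (q : ℂ) := by
      rw [Complex.mul_conj, ← Complex.sq_norm, habs α hα]
      push_cast; ring
    rw [eq_div_iff h0, mul_comm]
    exact hm
  -- (q/α)² = q ↔ α² = q
  have hsq_iff : ∀ α : ℂ, α ≠ 0 → (((q : ℂ) / α) ^ 2 = (q : ℂ) ↔ α ^ 2 = (q : ℂ)) := by
    intro α h0
    rw [div_pow, div_eq_iff (pow_ne_zero 2 h0)]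
    constructor
    · intro h
      have : (q : ℂ) * α ^ 2 = (q : ℂ) * (q : ℂ) := by linear_combination -h
      exact mul_left_cancel₀ hqC this
    · intro h; rw [h]; ring
  -- q/α = α iff α² = q
  have hfix : ∀ α : ℂ, α ≠ 0 → α ^ 2 = (q : ℂ) → (q : ℂ) / α = α := by
    intro α h0 h
    rw [div_eq_iff h0, ← h]
    ring
  have hgg : ∀ α : ℂ, α ≠ 0 → (q : ℂ) / ((q : ℂ) / α) = α := by
    intro α h0; field_simp
  set S : Finset ℂ := R.filter (fun α => α ^ 2 = (q : ℂ)) with hS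
  set T : Finset ℂ := R.filter (fun α => ¬ α ^ 2 = (q : ℂ)) with hT
  set A : ℂ := ∏ α ∈ S, α ^ e α with hA
  set B : ℂ := ∏ α ∈ T, α ^ e α with hB
  set P₀ : ℂ := ∏ α ∈ R, α ^ e₀ α with hP₀
  set t₀ : ℤ := ∑ α ∈ R, e₀ α with ht₀
  have hAB : A * B = (q : ℂ) ^ d := by
    rw [hA, hB, hS, hT, Finset.prod_filter_mul_prod_filter_not, hd]
  have hP₀B : P₀ = B := by
    rw [hP₀, ← Finset.prod_filter_mul_prod_filter_not R (fun α => α ^ 2 = (q : ℂ)), ← hS, ← hT]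
    have h1 : ∏ α ∈ S, α ^ e₀ α = 1 := by
      apply Finset.prod_eq_one
      intro α hα
      rw [hS, Finset.mem_filter] at hα
      rw [he₀ α hα.1, if_pos hα.2, zpow_zero]
    have h2 : ∏ α ∈ T, α ^ e₀ α = B := by
      rw [hB]
      apply Finset.prod_congr rfl
      intro α hα
      rw [hT, Finset.mem_filter] at hα
      rw [he₀ α hα.1, if_neg hα.2]
    rw [h1, h2, one_mul]
  have hA0 : A ≠ 0 := by
    rw [hA]
    apply Finset.prod_ne_zero_iff.mpr
    intro α hα
    exact zpow_ne_zero _ (hR0 α (Finset.mem_filter.mp hα).1)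
  have hcA : (starRingEnd ℂ) A = A := by
    rw [hA, map_prod]
    apply Finset.prod_congr rfl
    intro β hβ
    rw [hS, Finset.mem_filter] at hβ
    rw [map_zpow₀, hconj_eq β hβ.1, hfix β (hR0 β hβ.1) hβ.2]
  have hP₀real : (starRingEnd ℂ) P₀ = P₀ := by
    have hBv : B = (q : ℂ) ^ d / A := by
      rw [eq_div_iff hA0]
      linear_combination hAB
    rw [hP₀B, hBv, map_div₀, map_zpow₀, map_intCast, hcA]
  have hcP₀ : P₀ * (starRingEnd ℂ) P₀ = (q : ℂ) ^ t₀ := by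
    rw [hP₀, ht₀, map_prod, ← Finset.prod_mul_distrib, zpow_sum_aux hqC]
    apply Finset.prod_congr rfl
    intro α hα
    have h0 := hR0 α hα
    rw [map_zpow₀, hconj_eq α hα, ← mul_zpow]
    congr 1
    field_simp
  have hP₀sq : P₀ ^ (2 : ℕ) = (q : ℂ) ^ t₀ := by
    rw [sq, ← hcP₀, hP₀real]
  -- the key nontriviality fact
  have key : ¬ (∀ α ∈ R, e₀ α = e₀ ((q : ℂ) / α)) := by
    intro htriv
    apply hnontriv
    -- setup √q
    set c : ℝ := Real.sqrt (q : ℝ) with hc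
    have hcsq : c ^ 2 = (q : ℝ) := Real.sq_sqrt hqR.le
    have hc0 : 0 < c := Real.sqrt_pos.mpr hqR
    have hq2R : (2 : ℝ) ≤ (q : ℝ) := by exact_mod_cast hq
    have hc1 : 1 < c := by nlinarith [hcsq, hc0, hq2R]
    have hcC : ((c : ℂ)) ^ 2 = (q : ℂ) := by
      rw [← Complex.ofReal_pow, hcsq]; push_cast; ring
    have hcC0 : ((c : ℝ) : ℂ) ≠ 0 := by
      simpa using (Complex.ofReal_ne_zero.mpr hc0.ne')
    have hroots : ∀ β : ℂ, β ^ 2 = (q : ℂ) → β = (c : ℂ) ∨ β = -(c : ℂ) := by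
      intro β hβ
      have h2 : (β - (c : ℂ)) * (β + (c : ℂ)) = 0 := by linear_combination hβ - hcC
      rcases mul_eq_zero.mp h2 with h | h
      · left; linear_combination h
      · right; linear_combination h
    -- e is constant on conjugate pairs outside S
    have heT : ∀ a ∈ T, e ((q : ℂ) / a) = e a := by
      intro a ha
      rw [hT, Finset.mem_filter] at ha
      have h0 := hR0 a ha.1
      have hqa : (q : ℂ) / a ∈ R := hconj a ha.1
      have hqasq : ¬ ((q : ℂ) / a) ^ 2 = (q : ℂ) := by
        rw [hsq_iff a h0]; exact ha.2
      have := htriv a ha.1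
      rw [he₀ a ha.1, if_neg ha.2, he₀ _ hqa, if_neg hqasq] at this
      exact this.symm
    -- involution: B = q ^ u
    set k : ℂ → ℤ := fun α => if 0 < α.im then e α else 0 with hk
    set u : ℤ := ∑ α ∈ T, k α with hu
    have hTim : ∀ a ∈ T, a.im ≠ 0 := by
      intro a ha him
      rw [hT, Finset.mem_filter] at ha
      have h0 := hR0 a ha.1
      apply ha.2
      have hre : (starRingEnd ℂ) a = a := Complex.conj_eq_iff_im.mpr him
      rw [hconj_eq a ha.1, div_eq_iff h0] at hre
      rw [sq]
      exact hre.symm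
    have hinv : ∏ a ∈ T, (a ^ e a * (((q : ℂ)) ^ k a)⁻¹) = 1 := by
      apply Finset.prod_involution (g := fun a _ => (q : ℂ) / a)
      · -- f a * f (g a) = 1
        intro a ha
        have haT := ha
        rw [hT, Finset.mem_filter] at haT
        have haT' := ha
        have h0 := hR0 a haT.1
        have hee : e ((q : ℂ) / a) = e a := heT a ha
        have hkk : k a + k ((q : ℂ) / a) = e a := by
          have him : ((q : ℂ) / a).im = -a.im := by
            rw [← hconj_eq a haT.1]; simp
          rcases lt_or_gt_of_ne (hTim a ha) with h | h
          · rw [hk]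
            simp only [him]
            rw [if_neg (by linarith), if_pos (by linarith), hee, zero_add]
          · rw [hk]
            simp only [him]
            rw [if_pos h, if_neg (by linarith), add_zero]
        rw [hee]
        have hstep : a ^ e a * (((q : ℂ)) ^ k a)⁻¹ *
            (((q : ℂ) / a) ^ e a * (((q : ℂ)) ^ k ((q : ℂ) / a))⁻¹) =
            (a * ((q : ℂ) / a)) ^ e a * (((q : ℂ)) ^ (k a + k ((q : ℂ) / a)))⁻¹ := by
          rw [mul_zpow, zpow_add₀ hqC, mul_inv]
          ring
        rw [hstep, hkk]
        rw [show a * ((q : ℂ) / a) = (q : ℂ) by field_simp]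
        exact mul_inv_cancel₀ (zpow_ne_zero _ hqC)
      · -- g a ≠ a
        intro a ha hne hEq
        have ha' := ha
        rw [hT, Finset.mem_filter] at ha'
        apply ha'.2
        have h0 := hR0 a ha'.1
        have h1 : (q : ℂ) / a = a := hEq
        rw [div_eq_iff h0] at h1
        rw [sq]
        exact h1.symm
      · -- g a ∈ T
        intro a ha
        have ha' := ha
        rw [hT, Finset.mem_filter] at ha'
        show (q : ℂ) / a ∈ T
        rw [hT, Finset.mem_filter]
        exact ⟨hconj a ha'.1, by rw [hsq_iff a (hR0 a ha'.1)]; exact ha'.2⟩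
      · -- g (g a) = a
        intro a ha
        have ha' := ha
        rw [hT, Finset.mem_filter] at ha'
        exact hgg a (hR0 a ha'.1)
    have hBu : B = (q : ℂ) ^ u := by
      rw [Finset.prod_mul_distrib, ← hB, Finset.prod_inv_distrib] at hinv
      rw [hu, zpow_sum_aux hqC]
      have hprod0 : (∏ a ∈ T, ((q : ℂ)) ^ k a) ≠ 0 :=
        Finset.prod_ne_zero_iff.mpr fun a _ => zpow_ne_zero _ hqC
      field_simp at hinv
      exact hinv
    have hAq : A = (q : ℂ) ^ (d - u) := by
      rw [zpow_sub₀ hqC, eq_div_iff (zpow_ne_zero _ hqC), ← hBu, hAB]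
    -- decompose A
    set s : ℤ := ∑ β ∈ S, e β with hs
    set σ : ℂ := ∏ β ∈ S, (β / (c : ℂ)) ^ e β with hσ
    have hA2 : A = σ * ((c : ℂ)) ^ s := by
      rw [hA, hσ, hs, zpow_sum_aux hcC0, ← Finset.prod_mul_distrib]
      apply Finset.prod_congr rfl
      intro β _
      rw [← mul_zpow, div_mul_cancel₀ _ hcC0]
    have habsS : ∀ β ∈ S, ‖β‖ = c := by
      intro β hβ
      rw [hS, Finset.mem_filter] at hβ
      have h1 := habs β hβ.1
      nlinarith [norm_nonneg β, hcsq, hc0]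
    have habsσ : ‖σ‖ = 1 := by
      rw [hσ, norm_prod]
      apply Finset.prod_eq_one
      intro β hβ
      rw [norm_zpow, norm_div, habsS β hβ, Complex.norm_of_nonneg hc0.le,
        div_self hc0.ne', one_zpow]
    have hqc2 : (q : ℂ) ^ (d - u) = ((c : ℂ)) ^ (2 * (d - u)) := by
      rw [← hcC, ← zpow_natCast ((c:ℂ)) 2, ← zpow_mul]
      norm_num
    have hseq : s = 2 * (d - u) := by
      have h1 : ‖A‖ = c ^ s := by
        rw [hA2, norm_mul, habsσ, one_mul, norm_zpow, Complex.norm_of_nonneg hc0.le]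
      have h2 : ‖A‖ = c ^ (2 * (d - u)) := by
        rw [hAq, hqc2, norm_zpow, Complex.norm_of_nonneg hc0.le]
      exact zpow_right_injective₀ hc0 hc1.ne' (h1.symm.trans h2)
    have hσ1 : σ = 1 := by
      have h1 : σ * ((c : ℂ)) ^ s = 1 * ((c : ℂ)) ^ s := by
        rw [one_mul, ← hA2, hAq, hqc2, hseq]
      exact mul_right_cancel₀ (zpow_ne_zero _ hcC0) h1
    -- Even (e (-c)) when -c ∈ S
    have hevneg : -(c : ℂ) ∈ S → Even (e (-(c : ℂ))) := by
      intro hmem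
      have hσv : σ = (-(c : ℂ) / (c : ℂ)) ^ e (-(c : ℂ)) := by
        rw [hσ]
        apply Finset.prod_eq_single_of_mem _ hmem
        intro b hb hne
        rw [hS, Finset.mem_filter] at hb
        rcases hroots b hb.2 with rfl | rfl
        · rw [div_self hcC0, one_zpow]
        · exact absurd rfl hne
      rw [neg_div, div_self hcC0] at hσv
      rw [hσ1] at hσv
      by_contra hodd
      rw [Int.not_even_iff_odd] at hodd
      rw [hodd.neg_one_zpow] at hσv
      norm_num at hσv
    have hevpos : (c : ℂ) ∈ S → Even (e ((c : ℂ))) := by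
      intro hmem
      have hsum : e ((c : ℂ)) + ∑ x ∈ S.erase (c : ℂ), e x = s :=
        Finset.add_sum_erase S e hmem
      have hsub : S.erase (c : ℂ) ⊆ {-(c : ℂ)} := by
        intro b hb
        have hb1 := Finset.mem_of_mem_erase hb
        have hbne := Finset.ne_of_mem_erase hb
        rw [hS, Finset.mem_filter] at hb1
        rcases hroots b hb1.2 with rfl | rfl
        · exact absurd rfl hbne
        · exact Finset.mem_singleton_self _
      have hEsum : Even (∑ x ∈ S.erase (c : ℂ), e x) := by
        rcases Finset.subset_singleton_iff.mp hsub with h | h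
        · rw [h]; simp
        · rw [h, Finset.sum_singleton]
          apply hevneg
          have : -(c : ℂ) ∈ S.erase (c : ℂ) := by rw [h]; exact Finset.mem_singleton_self _
          exact Finset.mem_of_mem_erase this
      have hEs : Even s := by rw [hseq]; exact ⟨d - u, by ring⟩
      have : e ((c : ℂ)) = s - ∑ x ∈ S.erase (c : ℂ), e x := by omega
      rw [this, Int.even_sub]
      simp [hEs, hEsum]
    constructor
    · intro α hα
      by_cases hsq : α ^ 2 = (q : ℂ)
      · rw [hfix α (hR0 α hα) hsq]
      · have hqα : (q : ℂ) / α ∈ R := hconj α hα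
        have hqαsq : ¬ ((q : ℂ) / α) ^ 2 = (q : ℂ) := by
          rw [hsq_iff α (hR0 α hα)]; exact hsq
        have h1 : e₀ α = e α := by rw [he₀ α hα, if_neg hsq]
        have h2 : e₀ ((q : ℂ) / α) = e ((q : ℂ) / α) := by rw [he₀ _ hqα, if_neg hqαsq]
        rw [← h1, ← h2]; exact htriv α hα
    · intro β hβ hβsq
      have hβS : β ∈ S := by rw [hS, Finset.mem_filter]; exact ⟨hβ, hβsq⟩
      rcases hroots β hβsq with rfl | rfl
      · exact hevpos hβS
      · exact hevneg hβS
  have hP₀0 : P₀ ≠ 0 := by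
    rw [hP₀]
    exact Finset.prod_ne_zero_iff.mpr fun α hα => zpow_ne_zero _ (hR0 α hα)
  refine ⟨fun h => key h.1, ?_⟩
  intro m hm0 hmE
  obtain ⟨kk, hkk⟩ := hmE
  refine ⟨⟨t₀ * kk, ?_⟩, ?_, ?_, ?_⟩
  · -- admissibility of m * e₀
    have h1 : ∏ α ∈ R, α ^ (m * e₀ α) = P₀ ^ m := by
      rw [hP₀, ← Finset.prod_zpow]
      apply Finset.prod_congr rfl
      intro α _
      rw [← zpow_mul, mul_comm]
    rw [h1, show m = 2 * kk by omega, zpow_mul, zpow_two, ← sq, hP₀sq, ← zpow_mul]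
  · -- nontriviality of m * e₀
    rintro ⟨h1, _⟩
    apply key
    intro α hα
    exact mul_left_cancel₀ hm0 (h1 α hα)
  · -- weight equality
    rw [Finset.mul_sum]
    apply Finset.sum_congr rfl
    intro α _
    rw [abs_mul]
  · -- weight inequality
    apply mul_le_mul_of_nonneg_left _ (abs_nonneg m)
    apply Finset.sum_le_sum
    intro α hα
    rw [he₀ α hα]
    split
    · simp
    · exact le_refl _
end

section
/- Suppose α₁ and α₂ are distinct elements of R with α₁² ≠ q and α₂² ≠ q, and suppose m is a positive integer such that (α₂/α₁)^m = 1. Then there exists a reduced admissible function e : R → ℤ of weight 2m. -/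
open Finset

/-- If `α₁, α₂` are distinct elements of `R` with `α₁² ≠ q`, `α₂² ≠ q`, and
`(α₂/α₁)^m = 1` for a positive integer `m`, then there is a reduced admissible function
`e : R → ℤ` of weight `2m`. -/
theorem stmt_8 (q : ℤ) (hq : 2 ≤ q) (R : Finset ℂ) (hRne : R.Nonempty)
    (hR0 : ∀ α ∈ R, α ≠ 0)
    (habs : ∀ α ∈ R, ‖α‖ ^ 2 = (q : ℝ))
    (hconj : ∀ α ∈ R, (q : ℂ) / α ∈ R)
    (α₁ α₂ : ℂ) (h₁ : α₁ ∈ R) (h₂ : α₂ ∈ R) (hne : α₁ ≠ α₂)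
    (hsq₁ : α₁ ^ 2 ≠ (q : ℂ)) (hsq₂ : α₂ ^ 2 ≠ (q : ℂ))
    (m : ℕ) (hm : 0 < m) (hroot : (α₂ / α₁) ^ m = 1) :
    ∃ (e : ℂ → ℤ) (d : ℤ),
      (∏ α ∈ R, α ^ e α = (q : ℂ) ^ d) ∧ 1 ≤ d ∧
      (∀ α ∈ R, 0 ≤ e α) ∧
      (∀ α ∈ R, α ^ 2 ≠ (q : ℂ) → e α = 0 ∨ e ((q : ℂ) / α) = 0) ∧
      (∀ β ∈ R, β ^ 2 = (q : ℂ) → e β = 0 ∨ e β = 1) ∧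
      (∑ α ∈ R, |e α|) = 2 * (m : ℤ) := by
  have hq0 : (q : ℂ) ≠ 0 := by
    exact_mod_cast (by omega : q ≠ 0)
  have hα₁0 : α₁ ≠ 0 := hR0 _ h₁
  have hα₂0 : α₂ ≠ 0 := hR0 _ h₂
  have hqα₁ : (q : ℂ) / α₁ ∈ R := hconj _ h₁
  have hαpow : α₂ ^ m = α₁ ^ m := by
    have := hroot
    rw [div_pow, div_eq_one_iff_eq (pow_ne_zero _ hα₁0)] at this
    exact this
  refine ⟨fun α => (if α = α₂ then (m : ℤ) else 0) + (if α = (q : ℂ) / α₁ then (m : ℤ) else 0),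
    m, ?_, by exact_mod_cast hm, ?_, ?_, ?_, ?_⟩
  · have hfac : ∀ α ∈ R,
        α ^ ((if α = α₂ then (m : ℤ) else 0) + (if α = (q : ℂ) / α₁ then (m : ℤ) else 0))
        = (if α = α₂ then α ^ (m : ℤ) else 1) * (if α = (q : ℂ) / α₁ then α ^ (m : ℤ) else 1) := by
      intro α hα
      rw [zpow_add₀ (hR0 α hα)]
      split_ifs <;> simp
    rw [Finset.prod_congr rfl hfac, Finset.prod_mul_distrib,
      Finset.prod_ite_eq' R α₂ (fun α => α ^ (m : ℤ)),
      Finset.prod_ite_eq' R ((q : ℂ) / α₁) (fun α => α ^ (m : ℤ))]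
    simp only [h₂, hqα₁, if_pos]
    rw [zpow_natCast, zpow_natCast, zpow_natCast, div_pow, hαpow]
    field_simp
  · intro α _
    dsimp only
    split_ifs <;> omega
  · intro α hα hα2
    by_cases hc1 : α = α₂
    · right
      subst hc1
      have hne1 : (q : ℂ) / α ≠ α := by
        intro h
        apply hα2
        field_simp at h
        exact h.symm
      have hne2 : (q : ℂ) / α ≠ (q : ℂ) / α₁ := by
        intro h
        apply hne
        rw [div_eq_div_iff hα₂0 hα₁0] at h
        exact mul_left_cancel₀ hq0 h
      simp [hne1, hne2]
    · by_cases hc2 : α = (q : ℂ) / α₁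
      · right
        subst hc2
        have hqq : (q : ℂ) / ((q : ℂ) / α₁) = α₁ := by field_simp
        rw [hqq]
        have hne1 : α₁ ≠ α₂ := hne
        have hne2 : α₁ ≠ (q : ℂ) / α₁ := by
          intro h
          apply hsq₁
          field_simp at h
          exact h
        simp [hne1, hne2]
      · left
        simp [hc1, hc2]
  · intro β hβ hβ2
    left
    have hne1 : β ≠ α₂ := by
      intro h; apply hsq₂; rw [← h]; exact hβ2
    have hne2 : β ≠ (q : ℂ) / α₁ := by
      intro h
      apply hsq₁
      rw [h] at hβ2
      field_simp at hβ2
      have : (q : ℂ) * α₁ ^ 2 = (q : ℂ) * (q : ℂ) := by rw [hβ2.symm]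
      exact mul_left_cancel₀ hq0 this
    simp [hne1, hne2]
  · have habse : ∀ α ∈ R,
        |(if α = α₂ then (m : ℤ) else 0) + (if α = (q : ℂ) / α₁ then (m : ℤ) else 0)|
        = (if α = α₂ then (m : ℤ) else 0) + (if α = (q : ℂ) / α₁ then (m : ℤ) else 0) := by
      intro α _
      apply abs_of_nonneg
      split_ifs <;> omega
    rw [Finset.sum_congr rfl habse, Finset.sum_add_distrib,
      Finset.sum_ite_eq' R α₂ (fun _ => (m : ℤ)),
      Finset.sum_ite_eq' R ((q : ℂ) / α₁) (fun _ => (m : ℤ))]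
    simp only [h₂, hqα₁, if_pos]
    ring
end

section
/- Assume R is not small. Let w be a positive integer and suppose there exists a nontrivial admissible function on R of weight at most w. Then there exist a nonempty subset A₁ ⊆ R, an integer-valued function ẽ : A₁ → ℤ, and a positive integer s ≤ w such that: (1) for every α ∈ A₁ one has q/α ∉ A₁ and ẽ(α) > 0; (2) ∏_{α∈A₁} α^{ẽ(α)} = q^s. In particular, the function f : R → ℤ defined by f(α) = ẽ(α) for α ∈ A₁ and f(α) = 0 otherwise is a reduced admissible function of weight 2s ≤ 2w that vanishes identically on R^ι. -/
open Finset

private lemma zpow_sum_eq {F : Type*} [Field F] {a : F} (ha : a ≠ 0)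
    {ι : Type*} (s : Finset ι) (g : ι → ℤ) :
    a ^ (∑ i ∈ s, g i) = ∏ i ∈ s, a ^ g i := by
  classical
  induction s using Finset.cons_induction with
  | empty => simp
  | cons i s hi ih => rw [Finset.sum_cons, Finset.prod_cons, zpow_add₀ ha, ih]

/-- Assume `R` is not small and there exists a nontrivial admissible function
of weight at most `w`. Then there exist a nonempty `A₁ ⊆ R`, a function `ẽ : A₁ → ℤ`, and a
positive integer `s ≤ w` such that: (1) for every `α ∈ A₁`, `q/α ∉ A₁` and `ẽ α > 0`;
(2) `∏_{α∈A₁} α^{ẽ α} = q^s`. In particular, the extension-by-zero `f` of `ẽ` to `R` is a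
reduced admissible function of weight `2s ≤ 2w` vanishing identically on `R^ι`. -/
theorem stmt_9 (q : ℤ) (hq : 2 ≤ q) (R : Finset ℂ) (hRne : R.Nonempty)
    (hR0 : ∀ α ∈ R, α ≠ 0)
    (habs : ∀ α ∈ R, ‖α‖ ^ 2 = (q : ℝ))
    (hconj : ∀ α ∈ R, (q : ℂ) / α ∈ R)
    (hnotsmall : ∀ α₁ ∈ R, ∀ α₂ ∈ R, α₁ ≠ α₂ → ∀ n : ℕ, 0 < n → (α₁ / α₂) ^ n ≠ 1)
    (w : ℤ) (hw : 0 < w)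
    (hex : ∃ e : ℂ → ℤ,
      (∃ d : ℤ, ∏ α ∈ R, α ^ e α = (q : ℂ) ^ d) ∧
      (¬ ((∀ α ∈ R, e α = e ((q : ℂ) / α)) ∧
        ∀ β ∈ R, β ^ 2 = (q : ℂ) → Even (e β))) ∧
      (∑ α ∈ R, |e α|) ≤ w) :
    ∃ (A₁ : Finset ℂ) (etil : ℂ → ℤ) (s : ℤ),
      A₁ ⊆ R ∧ A₁.Nonempty ∧ 0 < s ∧ s ≤ w ∧
      (∀ α ∈ A₁, (q : ℂ) / α ∉ A₁ ∧ 0 < etil α) ∧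
      (∏ α ∈ A₁, α ^ etil α = (q : ℂ) ^ s) ∧
      -- the "in particular" part, for `f` the extension of `ẽ` by zero:
      (∀ f : ℂ → ℤ, (∀ α, f α = if α ∈ A₁ then etil α else 0) →
        (∏ α ∈ R, α ^ f α = (q : ℂ) ^ s) ∧ 1 ≤ s ∧
        (∀ α ∈ R, 0 ≤ f α) ∧
        (∀ α ∈ R, α ^ 2 ≠ (q : ℂ) → f α = 0 ∨ f ((q : ℂ) / α) = 0) ∧
        (∀ β ∈ R, β ^ 2 = (q : ℂ) → f β = 0 ∨ f β = 1) ∧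
        (∑ α ∈ R, |f α|) = 2 * s ∧ 2 * s ≤ 2 * w ∧
        (∀ β ∈ R, β ^ 2 = (q : ℂ) → f β = 0)) := by
  classical
  obtain ⟨e, ⟨d, hprod⟩, hnontriv, hwt⟩ := hex
  have hq0R : (0:ℝ) < (q:ℝ) := by exact_mod_cast (by omega : (0:ℤ) < q)
  have hq1R : (1:ℝ) < (q:ℝ) := by exact_mod_cast (by omega : (1:ℤ) < q)
  have hqC : (q:ℂ) ≠ 0 := by
    exact_mod_cast (by omega : q ≠ 0)
  set τ : ℂ → ℂ := fun α => (q:ℂ)/α with hτdef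
  have hτR : ∀ α ∈ R, τ α ∈ R := fun α hα => hconj α hα
  have hττ : ∀ α ∈ R, τ (τ α) = α := by
    intro α hα
    have h0 := hR0 α hα
    simp only [hτdef]
    field_simp
  have reindexP : ∀ g : ℂ → ℂ, ∏ α ∈ R, g (τ α) = ∏ α ∈ R, g α := fun g =>
    Finset.prod_nbij' τ τ hτR hτR hττ hττ (fun a _ => rfl)
  have reindexS : ∀ g : ℂ → ℤ, ∑ α ∈ R, g (τ α) = ∑ α ∈ R, g α := fun g =>
    Finset.sum_nbij' τ τ hτR hτR hττ hττ (fun a _ => rfl)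
  set E : ℂ → ℤ := fun α => e α - e (τ α) with hEdef
  have hEanti : ∀ α ∈ R, E (τ α) = - E α := by
    intro α hα; simp only [hEdef]; rw [hττ α hα]; ring
  set u : ℤ := ∑ α ∈ R, e α with hudef
  have h2 : ∏ α ∈ R, α ^ (e (τ α)) = (q:ℂ) ^ (u - d) := by
    have h3 : ∏ α ∈ R, (τ α) ^ (e (τ (τ α))) = ∏ α ∈ R, α ^ (e (τ α)) :=
      reindexP (fun β => β ^ (e (τ β)))
    rw [← h3]
    have h4 : ∏ α ∈ R, (τ α) ^ (e (τ (τ α))) = ∏ α ∈ R, ((q:ℂ) ^ (e α)) / α ^ (e α) := by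
      apply Finset.prod_congr rfl
      intro α hα
      rw [hττ α hα]
      simp only [hτdef]
      exact div_zpow _ _ _
    rw [h4, Finset.prod_div_distrib, hprod, ← zpow_sum_eq hqC, ← hudef, ← zpow_sub₀ hqC]
  have hEprod : ∏ α ∈ R, α ^ (E α) = (q:ℂ) ^ (d - (u - d)) := by
    have h5 : ∏ α ∈ R, α ^ (E α) = ∏ α ∈ R, (α ^ (e α) / α ^ (e (τ α))) := by
      apply Finset.prod_congr rfl; intro α hα
      exact zpow_sub₀ (hR0 α hα) _ _
    rw [h5, Finset.prod_div_distrib, hprod, h2, ← zpow_sub₀ hqC]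
  set r : ℝ := Real.sqrt (q:ℝ) with hrdef
  have hr0 : 0 < r := Real.sqrt_pos.mpr hq0R
  -- KEY STEP: E is somewhere positive
  have hexpos : ∃ α₀ ∈ R, 0 < E α₀ := by
    by_contra hcon
    push_neg at hcon
    have hE0 : ∀ α ∈ R, E α = 0 := by
      intro α hα
      have h1 := hcon α hα
      have h2' := hcon (τ α) (hτR α hα)
      rw [hEanti α hα] at h2'
      omega
    have hsymm : ∀ α ∈ R, e α = e ((q:ℂ)/α) := by
      intro α hα
      have h := hE0 α hα
      simp only [hEdef, hτdef] at h
      omega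
    have hsymm' : ∀ α ∈ R, e (τ α) = e α := by
      intro α hα; simp only [hτdef]; exact (hsymm α hα).symm
    obtain ⟨β₀, hβ₀R, hβ₀sq, hβ₀odd⟩ : ∃ β ∈ R, β^2 = (q:ℂ) ∧ ¬ Even (e β) := by
      by_contra h'
      push_neg at h'
      exact hnontriv ⟨hsymm, h'⟩
    set c : ℂ := (r : ℂ) with hcdef
    have hc0 : c ≠ 0 := by
      simp only [hcdef]
      exact_mod_cast hr0.ne'
    have hc2 : c^2 = (q:ℂ) := by
      rw [hcdef, ← Complex.ofReal_pow, Real.sq_sqrt hq0R.le]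
      norm_cast
    have hcnc : c ≠ -c := by
      intro h; exact hc0 (by linear_combination h / 2)
    set S : Finset ℂ := R.filter (fun β => β^2 = (q:ℂ)) with hSdef
    have hS : ∀ β ∈ S, β = c ∨ β = -c := by
      intro β hβ
      have hβ2 : β^2 = (q:ℂ) := (Finset.mem_filter.mp hβ).2
      have hfac : (β - c) * (β + c) = 0 := by linear_combination hβ2 - hc2
      rcases mul_eq_zero.mp hfac with h | h
      · left; exact sub_eq_zero.mp h
      · right; exact eq_neg_of_add_eq_zero_left h
    set T : Finset ℂ := R \ S with hTdef
    have hT : ∀ α ∈ T, α ∈ R ∧ α^2 ≠ (q:ℂ) := by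
      intro α hα
      rw [hTdef, Finset.mem_sdiff] at hα
      exact ⟨hα.1, fun h => hα.2 (Finset.mem_filter.mpr ⟨hα.1, h⟩)⟩
    have hτT : ∀ α ∈ T, τ α ∈ T := by
      intro α hα
      obtain ⟨hαR, hα2⟩ := hT α hα
      rw [hTdef, Finset.mem_sdiff]
      refine ⟨hτR α hαR, fun hmem => hα2 ?_⟩
      have h2' : (τ α)^2 = (q:ℂ) := (Finset.mem_filter.mp hmem).2
      have hα0 := hR0 α hαR
      simp only [hτdef, div_pow] at h2'
      rw [div_eq_iff (pow_ne_zero 2 hα0)] at h2'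
      exact mul_left_cancel₀ hqC (by rw [← h2']; ring : (q:ℂ) * α^2 = (q:ℂ) * (q:ℂ))
    have hτT_ne : ∀ α ∈ T, τ α ≠ α := by
      intro α hα h
      obtain ⟨hαR, hα2⟩ := hT α hα
      have hα0 := hR0 α hαR
      apply hα2
      simp only [hτdef] at h
      rw [div_eq_iff hα0] at h
      rw [sq]
      exact h.symm
    have claim1 : ∏ α ∈ T, (α/c) ^ (e α) = 1 := by
      refine Finset.prod_involution (fun a _ => τ a) ?_ (fun a ha _ => hτT_ne a ha)
        (fun a ha => hτT a ha) (fun a ha => hττ a (hT a ha).1)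
      intro a ha
      have haR := (hT a ha).1
      have ha0 := hR0 a haR
      rw [hsymm' a haR, ← mul_zpow]
      have hone : a / c * (τ a / c) = 1 := by
        simp only [hτdef]
        have hstep : a / c * ((q:ℂ) / a / c) = (q:ℂ) / c^2 := by
          field_simp
        rw [hstep, ← hc2, div_self (pow_ne_zero 2 hc0)]
      rw [hone, one_zpow]
    have claim2 : ∏ α ∈ T, ((-1:ℂ)) ^ (e α) = 1 := by
      refine Finset.prod_involution (fun a _ => τ a) ?_ (fun a ha _ => hτT_ne a ha)
        (fun a ha => hτT a ha) (fun a ha => hττ a (hT a ha).1)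
      intro a ha
      rw [hsymm' a (hT a ha).1, ← mul_zpow]
      norm_num
    have evenT : Even (∑ α ∈ T, e α) := by
      by_contra hodd
      rw [Int.not_even_iff_odd] at hodd
      have h := zpow_sum_eq (show (-1:ℂ) ≠ 0 by norm_num) T e
      rw [claim2, hodd.neg_one_zpow] at h
      norm_num at h
    have hST : (∏ α ∈ T, (α/c)^(e α)) * ∏ β ∈ S, (β/c)^(e β) = ∏ α ∈ R, (α/c)^(e α) :=
      Finset.prod_sdiff (Finset.filter_subset _ _)
    have hRprod : ∏ α ∈ R, (α/c)^(e α) = (q:ℂ)^d / c^u := by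
      have h6 : ∏ α ∈ R, (α/c)^(e α) = (∏ α ∈ R, α^(e α)) / (∏ α ∈ R, c^(e α)) := by
        rw [← Finset.prod_div_distrib]
        exact Finset.prod_congr rfl (fun α _ => div_zpow _ _ _)
      rw [h6, hprod, ← zpow_sum_eq hc0, ← hudef]
    have hSprod : ∏ β ∈ S, (β/c)^(e β) = (q:ℂ)^d / c^u := by
      rw [← hRprod, ← hST, claim1, one_mul]
    have hSprod' : ∏ β ∈ S, (β/c)^(e β) = (if -c ∈ S then (-1:ℂ)^(e (-c)) else 1) := by
      have h7 : ∀ β ∈ S, (β/c)^(e β) = (if β = -c then (-1:ℂ)^(e β) else 1) := by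
        intro β hβ
        rcases hS β hβ with h | h
        · rw [if_neg (by rw [h]; exact hcnc), h, div_self hc0, one_zpow]
        · rw [if_pos h, h, neg_div, div_self hc0]
      rw [Finset.prod_congr rfl h7, Finset.prod_ite_eq' S (-c) (fun β => (-1:ℂ)^(e β))]
    have hSsum : ∑ β ∈ S, e β
        = (if c ∈ S then e c else 0) + (if -c ∈ S then e (-c) else 0) := by
      have h8 : ∀ β ∈ S, e β
          = (if β = c then e β else 0) + (if β = -c then e β else 0) := by
        intro β hβ
        rcases hS β hβ with h | h
        · rw [if_pos h, if_neg (by rw [h]; exact hcnc), add_zero]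
        · rw [if_pos h, if_neg (by rw [h]; exact fun hh => hcnc hh.symm), zero_add]
      rw [Finset.sum_congr rfl h8, Finset.sum_add_distrib,
        Finset.sum_ite_eq' S c (fun β => e β), Finset.sum_ite_eq' S (-c) (fun β => e β)]
    have hcast : (q:ℂ)^d / c^u = (((q:ℝ)^d / r^u : ℝ) : ℂ) := by
      push_cast
      rfl
    have hposreal : (0:ℝ) < (q:ℝ)^d / r^u :=
      div_pos (zpow_pos hq0R d) (zpow_pos hr0 u)
    have hne_neg : (q:ℂ)^d / c^u ≠ -1 := by
      rw [hcast]
      intro h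
      have h' : ((q:ℝ)^d / r^u) = -1 := by exact_mod_cast h
      linarith
    have hevennc : -c ∈ S → Even (e (-c)) := by
      intro hmem
      by_contra hodd
      rw [Int.not_even_iff_odd] at hodd
      apply hne_neg
      rw [← hSprod, hSprod', if_pos hmem, hodd.neg_one_zpow]
    have hε : (q:ℂ)^d / c^u = 1 := by
      rw [← hSprod, hSprod']
      split_ifs with hmem
      · exact (hevennc hmem).neg_one_zpow
      · rfl
    have hqr : (q:ℝ)^d = r^u := by
      have h9 : ((q:ℝ)^d / r^u : ℝ) = 1 := by
        have := hcast ▸ hε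
        exact_mod_cast this
      have hru : r^u ≠ 0 := (zpow_pos hr0 u).ne'
      field_simp at h9
      exact h9
    have hr2 : r^(2:ℤ) = (q:ℝ) := by
      rw [show (2:ℤ) = ((2:ℕ):ℤ) from rfl, zpow_natCast, Real.sq_sqrt hq0R.le]
    have hu2d : u = d * 2 := by
      have h10 : (q:ℝ)^u = (q:ℝ)^(d*2) := by
        calc (q:ℝ)^u = (r^(2:ℤ))^u := by rw [hr2]
        _ = r^(2*u) := (zpow_mul r 2 u).symm
        _ = r^(u*2) := by rw [mul_comm]
        _ = (r^u)^(2:ℤ) := zpow_mul r u 2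
        _ = ((q:ℝ)^d)^(2:ℤ) := by rw [hqr]
        _ = (q:ℝ)^(d*2) := (zpow_mul _ d 2).symm
      exact (zpow_right_injective₀ hq0R hq1R.ne' h10)
    have hEvenu : Even u := ⟨d, by omega⟩
    have hSsum_even : Even (∑ β ∈ S, e β) := by
      have h11 : u = (∑ α ∈ T, e α) + (∑ β ∈ S, e β) := by
        rw [hudef, ← Finset.sum_sdiff (Finset.filter_subset (fun β => β^2 = (q:ℂ)) R)]
      rcases evenT with ⟨k, hk⟩
      rcases hEvenu with ⟨l, hl⟩
      exact ⟨l - k, by omega⟩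
    have hβ₀S : β₀ ∈ S := Finset.mem_filter.mpr ⟨hβ₀R, hβ₀sq⟩
    rcases hS β₀ hβ₀S with h | h
    · have hcS : c ∈ S := h ▸ hβ₀S
      rw [hSsum, if_pos hcS] at hSsum_even
      rw [h] at hβ₀odd
      by_cases hnc : -c ∈ S
      · have hev := hevennc hnc
        rw [if_pos hnc] at hSsum_even
        rcases hev with ⟨k, hk⟩
        rcases hSsum_even with ⟨l, hl⟩
        exact hβ₀odd ⟨l - k, by omega⟩
      · rw [if_neg hnc, add_zero] at hSsum_even
        exact hβ₀odd hSsum_even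
    · have hncS : -c ∈ S := h ▸ hβ₀S
      rw [h] at hβ₀odd
      exact hβ₀odd (hevennc hncS)
  -- MAIN CONSTRUCTION
  obtain ⟨α₀, hα₀R, hα₀pos⟩ := hexpos
  set A₁ : Finset ℂ := R.filter (fun α => 0 < E α) with hA₁def
  have hA₁R : A₁ ⊆ R := Finset.filter_subset _ _
  have hA₁mem : ∀ α, α ∈ A₁ ↔ α ∈ R ∧ 0 < E α := fun α => Finset.mem_filter
  have hA₁ne : A₁.Nonempty := ⟨α₀, (hA₁mem α₀).mpr ⟨hα₀R, hα₀pos⟩⟩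
  have hτA₁ : ∀ α ∈ A₁, τ α ∉ A₁ := by
    intro α hα hτα
    have h1 := ((hA₁mem α).mp hα).2
    have h2' := ((hA₁mem (τ α)).mp hτα).2
    rw [hEanti α ((hA₁mem α).mp hα).1] at h2'
    omega
  set m : ℤ := ∑ α ∈ A₁, E α with hmdef
  have hmpos : 0 < m :=
    Finset.sum_pos (fun α hα => ((hA₁mem α).mp hα).2) hA₁ne
  have hinj : ∀ x ∈ A₁, ∀ y ∈ A₁, τ x = τ y → x = y := by
    intro x hx y hy hxy
    have h := congrArg τ hxy
    rwa [hττ x (hA₁R hx), hττ y (hA₁R hy)] at h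
  set B : Finset ℂ := A₁.image τ with hBdef
  have hBR : ∀ β ∈ B, β ∈ R ∧ β ∉ A₁ := by
    intro β hβ
    obtain ⟨a, ha, rfl⟩ := Finset.mem_image.mp hβ
    exact ⟨hτR a (hA₁R ha), hτA₁ a ha⟩
  have hBsub : B ⊆ R \ A₁ := fun β hβ =>
    Finset.mem_sdiff.mpr ⟨(hBR β hβ).1, (hBR β hβ).2⟩
  have hEzero : ∀ α ∈ R, α ∉ A₁ → α ∉ B → E α = 0 := by
    intro α hαR hα1 hαB
    have h1 : ¬ 0 < E α := fun h => hα1 ((hA₁mem α).mpr ⟨hαR, h⟩)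
    rcases lt_trichotomy (E α) 0 with h | h | h
    · exfalso
      apply hαB
      have hτα : τ α ∈ A₁ := (hA₁mem _).mpr ⟨hτR α hαR, by rw [hEanti α hαR]; omega⟩
      exact Finset.mem_image.mpr ⟨τ α, hτα, hττ α hαR⟩
    · exact h
    · exact absurd h h1
  set P : ℂ := ∏ α ∈ A₁, α ^ E α with hPdef
  have hsplit : (∏ β ∈ R \ A₁, β ^ E β) * P = ∏ α ∈ R, α ^ E α := by
    rw [hPdef]; exact Finset.prod_sdiff hA₁R
  have hBprod : ∏ β ∈ R \ A₁, β ^ E β = ∏ β ∈ B, β ^ E β :=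
    (Finset.prod_subset hBsub (fun x hx hxB => by
      rw [hEzero x (Finset.mem_sdiff.mp hx).1 (Finset.mem_sdiff.mp hx).2 hxB,
        zpow_zero])).symm
  have hBprod2 : ∏ β ∈ B, β ^ E β = P * ((q:ℂ)^m)⁻¹ := by
    rw [hBdef, Finset.prod_image hinj]
    have h12 : ∀ a ∈ A₁, (τ a) ^ E (τ a) = a ^ E a * ((q:ℂ) ^ E a)⁻¹ := by
      intro a ha
      have haR := hA₁R ha
      have ha0 := hR0 a haR
      rw [hEanti a haR]
      simp only [hτdef]
      rw [zpow_neg, div_zpow, inv_div, div_eq_mul_inv]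
    rw [Finset.prod_congr rfl h12, Finset.prod_mul_distrib, Finset.prod_inv_distrib,
      ← zpow_sum_eq hqC, ← hmdef, ← hPdef]
  have hqm : (q:ℂ)^m ≠ 0 := zpow_ne_zero _ hqC
  have hPP : P * P = (q:ℂ) ^ ((d - (u - d)) + m) := by
    have h := hsplit
    rw [hBprod, hBprod2, hEprod] at h
    calc P * P = (P * ((q:ℂ)^m)⁻¹ * P) * (q:ℂ)^m := by
          field_simp
    _ = (q:ℂ)^(d-(u-d)) * (q:ℂ)^m := by rw [h]
    _ = (q:ℂ)^((d-(u-d)) + m) := (zpow_add₀ hqC _ _).symm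
  have habsα : ∀ α ∈ R, ‖α‖ = r := by
    intro α hα
    rw [hrdef, ← habs α hα, Real.sqrt_sq (norm_nonneg α)]
  have habsP : ‖P‖ = r ^ m := by
    rw [hPdef, norm_prod]
    have h13 : ∀ α ∈ A₁, ‖α ^ E α‖ = r ^ E α := by
      intro α hα
      rw [norm_zpow, habsα α (hA₁R hα)]
    rw [Finset.prod_congr rfl h13, ← zpow_sum_eq hr0.ne', ← hmdef]
  have habsqC : ‖((q:ℂ))‖ = (q:ℝ) := by
    rw [show ((q:ℤ):ℂ) = (((q:ℝ)):ℂ) by push_cast; ring, Complex.norm_real, Real.norm_eq_abs,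
      abs_of_pos hq0R]
  have hexp : (d - (u - d)) + m = m := by
    have h14 : (q:ℝ)^((d - (u - d)) + m) = (q:ℝ)^m := by
      have h15 : ‖P * P‖ = (q:ℝ)^m := by
        rw [norm_mul, habsP, ← mul_zpow, Real.mul_self_sqrt hq0R.le]
      have h16 : ‖(q:ℂ) ^ ((d - (u - d)) + m)‖ = (q:ℝ)^((d - (u - d)) + m) := by
        rw [norm_zpow, habsqC]
      rw [← h16, ← hPP, h15]
    exact zpow_right_injective₀ hq0R hq1R.ne' h14
  have hPP2 : P * P = (q:ℂ) ^ m := by rw [hPP, hexp]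
  -- weight bound
  have hwt2 : ∑ α ∈ R, |E α| ≤ 2 * w := by
    have h17 : ∀ α ∈ R, |E α| ≤ |e α| + |e (τ α)| := by
      intro α _
      simp only [hEdef]
      exact abs_sub _ _
    calc ∑ α ∈ R, |E α| ≤ ∑ α ∈ R, (|e α| + |e (τ α)|) := Finset.sum_le_sum h17
    _ = (∑ α ∈ R, |e α|) + ∑ α ∈ R, |e (τ α)| := Finset.sum_add_distrib
    _ = 2 * ∑ α ∈ R, |e α| := by rw [reindexS (fun α => |e α|)]; ring
    _ ≤ 2 * w := by omega
  have h2m : 2 * m ≤ ∑ α ∈ R, |E α| := by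
    have hsd : (∑ α ∈ R \ A₁, |E α|) + ∑ α ∈ A₁, |E α| = ∑ α ∈ R, |E α| :=
      Finset.sum_sdiff hA₁R
    have hA : ∑ α ∈ A₁, |E α| = m := by
      rw [hmdef]
      exact Finset.sum_congr rfl (fun α hα => abs_of_pos ((hA₁mem α).mp hα).2)
    have hBsum : ∑ β ∈ B, |E β| = m := by
      rw [hBdef, Finset.sum_image hinj, hmdef]
      apply Finset.sum_congr rfl
      intro a ha
      rw [hEanti a (hA₁R ha), abs_neg]
      exact abs_of_pos ((hA₁mem a).mp ha).2
    have hle : ∑ β ∈ B, |E β| ≤ ∑ α ∈ R \ A₁, |E α| :=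
      Finset.sum_le_sum_of_subset_of_nonneg hBsub (fun _ _ _ => abs_nonneg _)
    omega
  have hmw : m ≤ w := by omega
  have hprod2 : ∏ α ∈ A₁, α ^ (2 * E α) = (q:ℂ) ^ m := by
    have h18 : ∀ α ∈ A₁, α ^ (2 * E α) = (α ^ E α) * (α ^ E α) := by
      intro α hα
      rw [two_mul, zpow_add₀ (hR0 α (hA₁R hα))]
    rw [Finset.prod_congr rfl h18, Finset.prod_mul_distrib, ← hPdef, hPP2]
  have hβnotA : ∀ β ∈ R, β^2 = (q:ℂ) → β ∉ A₁ := by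
    intro β hβR hβ2 hβA
    have hβ0 := hR0 β hβR
    have hτβ : τ β = β := by
      simp only [hτdef]
      rw [← hβ2, sq, mul_div_assoc, div_self hβ0, mul_one]
    have hpos := ((hA₁mem β).mp hβA).2
    simp only [hEdef, hτβ] at hpos
    omega
  refine ⟨A₁, fun α => 2 * E α, m, hA₁R, hA₁ne, hmpos, hmw, ?_, hprod2, ?_⟩
  · intro α hα
    exact ⟨hτA₁ α hα, by have := ((hA₁mem α).mp hα).2; show 0 < 2 * E α; omega⟩
  · intro f hf
    have hfA : ∀ α ∈ A₁, f α = 2 * E α := fun α hα => by rw [hf α, if_pos hα]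
    have hf0 : ∀ α, α ∉ A₁ → f α = 0 := fun α hα => by rw [hf α, if_neg hα]
    refine ⟨?_, by omega, ?_, ?_, ?_, ?_, by omega, ?_⟩
    · have hsub : ∏ α ∈ A₁, α ^ f α = ∏ α ∈ R, α ^ f α :=
        Finset.prod_subset hA₁R (fun x _ hxA => by rw [hf0 x hxA, zpow_zero])
      rw [← hsub, Finset.prod_congr rfl (fun α hα => by rw [hfA α hα]), hprod2]
    · intro α _
      by_cases h : α ∈ A₁
      · rw [hfA α h]
        have := ((hA₁mem α).mp h).2
        omega
      · rw [hf0 α h]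
    · intro α hαR _
      by_cases h : α ∈ A₁
      · right
        exact hf0 _ (hτA₁ α h)
      · left; exact hf0 α h
    · intro β hβR hβ2
      left; exact hf0 β (hβnotA β hβR hβ2)
    · have hsum : ∑ α ∈ R, |f α| = ∑ α ∈ A₁, |f α| :=
        (Finset.sum_subset hA₁R (fun x _ hxA => by rw [hf0 x hxA, abs_zero])).symm
      rw [hsum,
        Finset.sum_congr rfl (fun α hα => by
          rw [hfA α hα, abs_of_pos (by have := ((hA₁mem α).mp hα).2; omega)]),
        ← Finset.mul_sum, ← hmdef]
    · intro β hβR hβ2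
      exact hf0 β (hβnotA β hβR hβ2)
end

section
/- Assume R is not small. Then the following six conditions are equivalent: (1a) there exists a nontrivial admissible function on R; (1b) there exists a nontrivial admissible function on R vanishing identically on R^ι; (2a) there exists a reduced admissible function on R; (2b) there exists a reduced admissible function on R vanishing identically on R^ι; (3a) the rank of Γ is at most ⌊#R/2⌋; (3b) the rank of Γ₁ is at most ⌊#R/2⌋. -/
open Finset TensorProduct

/-- `e` is admissible (of some degree) for `(q, R)`. -/
def AdmissibleFn (q : ℤ) (R : Finset ℂ) (e : ℂ → ℤ) : Prop :=
  ∃ d : ℤ, ∏ α ∈ R, α ^ e α = (q : ℂ) ^ d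

/-- `e` is trivial for `(q, R)`. -/
def TrivialFn (q : ℤ) (R : Finset ℂ) (e : ℂ → ℤ) : Prop :=
  (∀ α ∈ R, e α = e ((q : ℂ) / α)) ∧ ∀ β ∈ R, β ^ 2 = (q : ℂ) → Even (e β)

/-- `e` is a reduced admissible function for `(q, R)`. -/
def ReducedAdmissible (q : ℤ) (R : Finset ℂ) (e : ℂ → ℤ) : Prop :=
  ∃ d : ℤ, (∏ α ∈ R, α ^ e α = (q : ℂ) ^ d) ∧ 1 ≤ d ∧
    (∀ α ∈ R, 0 ≤ e α) ∧
    (∀ α ∈ R, α ^ 2 ≠ (q : ℂ) → e α = 0 ∨ e ((q : ℂ) / α) = 0) ∧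
    (∀ β ∈ R, β ^ 2 = (q : ℂ) → e β = 0 ∨ e β = 1)

/-- The rank `dim_ℚ (G ⊗_ℤ ℚ)` of a subgroup `G` of `ℂˣ`. -/
noncomputable def subgroupRank (G : Subgroup ℂˣ) : Cardinal :=
  Module.rank ℚ (ℚ ⊗[ℤ] Additive ↥G)


noncomputable def unit0 (x : ℂ) : ℂˣ :=
  if h : x = 0 then 1 else Units.mk0 x h

lemma unit0_coe {x : ℂ} (h : x ≠ 0) : (unit0 x : ℂ) = x := by
  rw [unit0, dif_neg h]; rfl

lemma aux_prod_zpow {M : Type*} [CommGroupWithZero M] {b : M} (hb : b ≠ 0) (s : Finset ℂ) (g : ℂ → ℤ) :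
    ∏ x ∈ s, b ^ g x = b ^ (∑ x ∈ s, g x) := by
  induction s using Finset.cons_induction with
  | empty => simp
  | cons a s ha ih => rw [Finset.prod_cons, Finset.sum_cons, ih, zpow_add₀ hb]

lemma aux_qpow_eq_one (q : ℤ) (hq : 2 ≤ q) {t : ℤ} (h : (q : ℂ) ^ t = 1) : t = 0 := by
  have hq0 : (0:ℝ) < (q:ℝ) := by exact_mod_cast (by omega : (0:ℤ) < q)
  have habs : ((q:ℝ)) ^ t = 1 := by
    have := congrArg (‖·‖) h
    rw [norm_zpow, norm_one] at this
    rwa [show ‖((q:ℤ):ℂ)‖ = (q:ℝ) by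
      rw [Complex.norm_intCast]; exact abs_of_pos (by exact_mod_cast (by omega : (0:ℤ) < q))] at this
  have hne : (q:ℝ) ≠ 1 := by exact_mod_cast (by omega : q ≠ 1)
  exact zpow_right_injective₀ hq0 hne (by simpa using habs)

lemma aux_sum_eq (q : ℤ) (hq : 2 ≤ q) (R : Finset ℂ)
    (habs : ∀ α ∈ R, ‖α‖ ^ 2 = (q : ℝ)) (e : ℂ → ℤ) (d : ℤ)
    (h : ∏ α ∈ R, α ^ e α = (q : ℂ) ^ d) : ∑ α ∈ R, e α = 2 * d := by
  have hq0 : (0:ℝ) < (q:ℝ) := by exact_mod_cast (by omega : (0:ℤ) < q)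
  have hs0 : 0 < Real.sqrt q := Real.sqrt_pos.mpr hq0
  have hs2 : Real.sqrt q ^ (2:ℤ) = (q:ℝ) := by
    rw [zpow_two]; exact Real.mul_self_sqrt hq0.le
  have hsne : Real.sqrt q ≠ 1 := by
    intro h1
    rw [h1] at hs2; simp at hs2
    have : (q:ℝ) ≠ 1 := by exact_mod_cast (by omega : q ≠ 1)
    exact this hs2.symm
  have key := congrArg (‖·‖) h
  rw [norm_prod] at key
  simp only [norm_zpow] at key
  have h1 : ∀ α ∈ R, ‖α‖ ^ e α = Real.sqrt q ^ e α := by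
    intro α hα
    congr 1
    have : Real.sqrt (‖α‖ ^ 2) = ‖α‖ := by
      rw [Real.sqrt_sq (norm_nonneg α)]
    rw [← this, habs α hα]
  rw [Finset.prod_congr rfl h1, aux_prod_zpow hs0.ne' R e] at key
  have h2 : ‖((q:ℤ):ℂ)‖ = (q:ℝ) := by
    rw [Complex.norm_intCast]; exact abs_of_pos (by exact_mod_cast (by omega : (0:ℤ) < q))
  rw [h2] at key
  have h3 : (q:ℝ) ^ d = Real.sqrt q ^ (2 * d) := by
    rw [zpow_mul, hs2]
  rw [h3] at key
  exact zpow_right_injective₀ hs0 hsne key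

lemma aux_half (q : ℂ) : ∀ (n : ℕ) (T : Finset ℂ), T.card = n →
    (∀ α ∈ T, α ≠ 0) → (∀ α ∈ T, q / α ∈ T) → (∀ α ∈ T, q / α ≠ α) →
    ∃ S : Finset ℂ, S ⊆ T ∧ (∀ α ∈ T, α ∈ S ∨ q / α ∈ S) ∧ (∀ α ∈ S, q / α ∉ S) ∧
      T.card = 2 * S.card := by
  intro n
  induction n using Nat.strong_induction_on with
  | _ n ih =>
    intro T hcard h0 hinv hfp
    rcases T.eq_empty_or_nonempty with rfl | ⟨a, ha⟩
    · exact ⟨∅, by simp⟩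
    · have ha0 : a ≠ 0 := h0 a ha
      have hqa : q / a ∈ T := hinv a ha
      have hqaa : q / a ≠ a := hfp a ha
      have hdd : ∀ α ∈ T, q / (q / α) = α := by
        intro α hα
        have hα0 : α ≠ 0 := h0 α hα
        have hq0 : q ≠ 0 := fun h => h0 _ (hinv α hα) (by simp [h])
        field_simp
      set T' := T \ {a, q / a} with hT'
      have hsub : {a, q/a} ⊆ T := by
        intro x hx
        rcases Finset.mem_insert.mp hx with rfl | hx
        · exact ha
        · rw [Finset.mem_singleton.mp hx]; exact hqa
      have hcard' : T'.card = n - 2 := by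
        rw [hT', Finset.card_sdiff_of_subset hsub, Finset.card_insert_of_notMem (by simp [Ne.symm hqaa]),
          Finset.card_singleton, hcard]
      have hn2 : 2 ≤ n := by
        have h2 : ({a, q/a} : Finset ℂ).card = 2 := by
          rw [Finset.card_insert_of_notMem (by simp [Ne.symm hqaa]), Finset.card_singleton]
        have := Finset.card_le_card hsub
        omega
      have hmemT' : ∀ α, α ∈ T' ↔ α ∈ T ∧ α ≠ a ∧ α ≠ q / a := by
        intro α
        simp only [hT', Finset.mem_sdiff, Finset.mem_insert, Finset.mem_singleton]
        tauto
      obtain ⟨S', hS'sub, hS'cov, hS'disj, hS'card⟩ :=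
        ih (n - 2) (by omega) T' hcard'
          (fun α hα => h0 α ((hmemT' α).mp hα).1)
          (fun α hα => by
            obtain ⟨hαT, hαa, hαqa⟩ := (hmemT' α).mp hα
            refine (hmemT' _).mpr ⟨hinv α hαT, ?_, ?_⟩
            · intro h; exact hαqa (by rw [← h, hdd α hαT])
            · intro h
              have := hdd α hαT
              rw [h, hdd a ha] at this; exact hαa this.symm)
          (fun α hα => hfp α ((hmemT' α).mp hα).1)
      have haS' : a ∉ S' := fun h => ((hmemT' a).mp (hS'sub h)).2.1 rfl
      refine ⟨insert a S', ?_, ?_, ?_, ?_⟩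
      · intro x hx
        rcases Finset.mem_insert.mp hx with rfl | hx
        · exact ha
        · exact ((hmemT' x).mp (hS'sub hx)).1
      · intro α hα
        by_cases h1 : α = a
        · exact Or.inl (by rw [h1]; exact Finset.mem_insert_self _ _)
        by_cases h2 : α = q / a
        · refine Or.inr ?_
          rw [h2, hdd a ha]; exact Finset.mem_insert_self _ _
        · rcases hS'cov α ((hmemT' α).mpr ⟨hα, h1, h2⟩) with h | h
          · exact Or.inl (Finset.mem_insert_of_mem h)
          · exact Or.inr (Finset.mem_insert_of_mem h)
      · intro α hα hbad
        rcases Finset.mem_insert.mp hα with rfl | hα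
        · rcases Finset.mem_insert.mp hbad with h | h
          · exact hqaa h
          · exact ((hmemT' _).mp (hS'sub h)).2.2 rfl
        · rcases Finset.mem_insert.mp hbad with h | h
          · have := hdd α ((hmemT' α).mp (hS'sub hα)).1
            rw [h] at this
            exact ((hmemT' α).mp (hS'sub hα)).2.2 this.symm
          · exact hS'disj α hα h
      · rw [Finset.card_insert_of_notMem haS']
        omega

lemma aux_prod_enum {M : Type*} [CommMonoid M] (S : Finset ℂ) (g : ℂ → M) :
    ∏ i : Fin S.card, g ((S.equivFin.symm i : ℂ)) = ∏ α ∈ S, g α := by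
  rw [← Finset.prod_attach S g, ← Finset.univ_eq_attach]
  exact Equiv.prod_comp S.equivFin.symm (fun x => g (x : ℂ))

lemma aux_span_top (X : Set ℂˣ) (p : Submodule ℚ (ℚ ⊗[ℤ] Additive ↥(Subgroup.closure X)))
    (h : ∀ y : ↥(Subgroup.closure X), (y : ℂˣ) ∈ X →
      (1 : ℚ) ⊗ₜ[ℤ] Additive.ofMul y ∈ p)
    (v : ℚ ⊗[ℤ] Additive ↥(Subgroup.closure X)) : v ∈ p := by
  have key : ∀ a : Additive ↥(Subgroup.closure X), (1 : ℚ) ⊗ₜ[ℤ] a ∈ p := by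
    let H : Subgroup ↥(Subgroup.closure X) :=
      { carrier := {y | (1 : ℚ) ⊗ₜ[ℤ] Additive.ofMul y ∈ p}
        one_mem' := by
          show (1 : ℚ) ⊗ₜ[ℤ] Additive.ofMul 1 ∈ p
          rw [ofMul_one, TensorProduct.tmul_zero]
          exact p.zero_mem
        mul_mem' := by
          intro a b ha hb
          show (1 : ℚ) ⊗ₜ[ℤ] Additive.ofMul (a * b) ∈ p
          rw [ofMul_mul, TensorProduct.tmul_add]
          exact p.add_mem ha hb
        inv_mem' := by
          intro a ha
          show (1 : ℚ) ⊗ₜ[ℤ] Additive.ofMul a⁻¹ ∈ p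
          rw [ofMul_inv, TensorProduct.tmul_neg]
          exact p.neg_mem ha }
    have htop : ∀ y : ↥(Subgroup.closure X), y ∈ H := by
      have hle : Subgroup.closure (Subtype.val ⁻¹' X) ≤ H :=
        (Subgroup.closure_le H).mpr (fun z hz => h z hz)
      rw [Subgroup.closure_closure_coe_preimage] at hle
      exact fun y => hle trivial
    exact fun a => htop (Additive.toMul a)
  induction v using TensorProduct.induction_on with
  | zero => exact p.zero_mem
  | tmul a y =>
    have : a ⊗ₜ[ℤ] y = a • ((1 : ℚ) ⊗ₜ[ℤ] y) := by
      rw [TensorProduct.smul_tmul', smul_eq_mul, mul_one]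
    rw [this]
    exact p.smul_mem a (key y)
  | add u w hu hw => exact p.add_mem hu hw

lemma aux_torsion {M : Type*} [AddCommGroup M] (x : M)
    (h : (1 : ℚ) ⊗ₜ[ℤ] x = (0 : ℚ ⊗[ℤ] M)) : ∃ n : ℤ, n ≠ 0 ∧ n • x = 0 := by
  have inst : IsLocalizedModule (nonZeroDivisors ℤ) (TensorProduct.mk ℤ ℚ M 1) :=
    (isLocalizedModule_iff_isBaseChange (nonZeroDivisors ℤ) ℚ _).mpr
      (TensorProduct.isBaseChange ℤ M ℚ)
  obtain ⟨s, hs⟩ := (IsLocalizedModule.eq_zero_iff (nonZeroDivisors ℤ)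
    (TensorProduct.mk ℤ ℚ M 1)).mp (by simpa using h)
  refine ⟨(s : ℤ), nonZeroDivisors.coe_ne_zero s, ?_⟩
  rwa [Submonoid.smul_def] at hs

lemma aux_zsmul_sum {M : Type*} [AddCommGroup M] {ι : Type*} (s : Finset ι) (n : ℤ)
    (f : ι → M) : n • (∑ i ∈ s, f i) = ∑ i ∈ s, n • f i := by
  induction s using Finset.cons_induction with
  | empty => simp
  | cons a s ha ih => rw [Finset.sum_cons, Finset.sum_cons, smul_add, ih]

lemma aux_ub (q : ℤ) (hq : 2 ≤ q) (S : Finset ℂ) (hS0 : ∀ α ∈ S, α ≠ 0)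
    (X : Set ℂˣ)
    (hqG : unit0 (q : ℂ) ∈ Subgroup.closure X)
    (hSG : ∀ α ∈ S, unit0 α ∈ Subgroup.closure X)
    (hX : ∀ x : ℂˣ, x ∈ X → ((x : ℂ) = (q : ℂ)) ∨
      (∃ γ ∈ S, (x : ℂ) = γ ∨ (x : ℂ) = (q : ℂ) / γ) ∨ ((x : ℂ) ^ 2 = (q : ℂ)))
    (f : ℂ → ℤ) (c : ℤ) (hrel : ∏ α ∈ S, α ^ f α = (q : ℂ) ^ c)
    (α₀ : ℂ) (hα₀S : α₀ ∈ S) (hf : f α₀ ≠ 0) :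
    Module.rank ℚ (ℚ ⊗[ℤ] Additive ↥(Subgroup.closure X)) ≤ (S.card : Cardinal) := by
  classical
  have hq0 : (q : ℂ) ≠ 0 := by
    exact_mod_cast (show (q:ℤ) ≠ 0 by omega)
  set G := Subgroup.closure X with hG
  set V := ℚ ⊗[ℤ] Additive ↥G with hV
  let L : Additive ↥G →ₗ[ℤ] V := TensorProduct.mk ℤ ℚ (Additive ↥G) 1
  let F : ∀ (x : ℂ), unit0 x ∈ G → V := fun x hx => L (Additive.ofMul (⟨unit0 x, hx⟩ : ↥G))
  let vset : ↥S → V := fun γ => if (γ : ℂ) = α₀ then F (q : ℂ) hqG else F (γ : ℂ) (hSG _ γ.2)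
  set p := Submodule.span ℚ (Set.range vset) with hp
  have zsmul_mem : ∀ (z : ℤ) (v : V), v ∈ p → z • v ∈ p := by
    intro z v hv
    rw [← Int.cast_smul_eq_zsmul ℚ]
    exact p.smul_mem _ hv
  let χ : ↥G →* ℂ := (Units.coeHom ℂ).comp G.subtype
  have hχ : ∀ y : ↥G, χ y = ((y : ℂˣ) : ℂ) := fun y => rfl
  have hinj : Function.Injective χ := fun a b hab => Subtype.ext (Units.ext hab)
  -- group-level relation
  have hUrel : (∏ γ ∈ S.attach, (⟨unit0 (γ : ℂ), hSG _ γ.2⟩ : ↥G) ^ (f (γ : ℂ)))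
      = (⟨unit0 (q : ℂ), hqG⟩ : ↥G) ^ c := by
    apply hinj
    rw [map_prod, map_zpow]
    have hcongr : ∀ γ ∈ S.attach,
        χ ((⟨unit0 (γ:ℂ), hSG _ γ.2⟩ : ↥G) ^ (f (γ:ℂ))) = (γ:ℂ) ^ f (γ:ℂ) := by
      intro γ _
      rw [map_zpow, hχ, unit0_coe (hS0 _ γ.2)]
    rw [Finset.prod_congr rfl hcongr, Finset.prod_attach S (fun x => x ^ f x), hrel,
      hχ, unit0_coe hq0]
  -- additive relation
  have hrelV : (∑ γ ∈ S.attach, f (γ : ℂ) • F (γ : ℂ) (hSG _ γ.2)) = c • F (q : ℂ) hqG := by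
    have := congrArg (fun y : ↥G => L (Additive.ofMul y)) hUrel
    simp only [ofMul_prod, ofMul_zpow, map_sum, map_zsmul] at this
    exact this
  have hvq : F (q : ℂ) hqG ∈ p := by
    have heq : vset ⟨α₀, hα₀S⟩ = F (q : ℂ) hqG := if_pos rfl
    rw [← heq]
    exact Submodule.subset_span ⟨_, rfl⟩
  have hvγ : ∀ γ : ↥S, (γ : ℂ) ≠ α₀ → F (γ : ℂ) (hSG _ γ.2) ∈ p := by
    intro γ hγ
    have heq : vset γ = F (γ : ℂ) (hSG _ γ.2) := if_neg hγ
    rw [← heq]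
    exact Submodule.subset_span ⟨_, rfl⟩
  have hα₀p : F α₀ (hSG _ hα₀S) ∈ p := by
    have hsplit := Finset.add_sum_erase S.attach
      (fun γ : ↥S => f (γ : ℂ) • F (γ : ℂ) (hSG _ γ.2)) (Finset.mem_attach S ⟨α₀, hα₀S⟩)
    have heq : f α₀ • F α₀ (hSG _ hα₀S)
        = c • F (q : ℂ) hqG - ∑ γ ∈ S.attach.erase ⟨α₀, hα₀S⟩,
            f (γ : ℂ) • F (γ : ℂ) (hSG _ γ.2) :=
      eq_sub_of_add_eq (hsplit.trans hrelV)
    have hmem : f α₀ • F α₀ (hSG _ hα₀S) ∈ p := by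
      rw [heq]
      refine sub_mem (zsmul_mem _ _ hvq) (Submodule.sum_mem p ?_)
      intro γ hγ
      have hne : (γ : ℂ) ≠ α₀ := by
        intro hc
        exact (Finset.mem_erase.mp hγ).1 (Subtype.ext hc)
      exact zsmul_mem _ _ (hvγ γ hne)
    have hmem2 : ((f α₀ : ℚ)) • F α₀ (hSG _ hα₀S) ∈ p := by
      rw [Int.cast_smul_eq_zsmul]
      exact hmem
    have hcalc := p.smul_mem ((f α₀ : ℚ))⁻¹ hmem2
    rwa [inv_smul_smul₀ (by exact_mod_cast hf)] at hcalc
  have hSp : ∀ γ (hγ : γ ∈ S), F γ (hSG _ hγ) ∈ p := by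
    intro γ hγ
    by_cases h : γ = α₀
    · subst h; exact hα₀p
    · exact hvγ ⟨γ, hγ⟩ h
  -- all generators are in p
  have hgen : ∀ y : ↥G, (y : ℂˣ) ∈ X → (1 : ℚ) ⊗ₜ[ℤ] Additive.ofMul y ∈ p := by
    intro y hy
    rcases hX _ hy with hcase | ⟨γ, hγS, hcase | hcase⟩ | hcase
    · have hyeq : y = ⟨unit0 (q : ℂ), hqG⟩ :=
        Subtype.ext (Units.ext (by rw [unit0_coe hq0]; exact hcase))
      rw [hyeq]; exact hvq
    · have hyeq : y = ⟨unit0 γ, hSG _ hγS⟩ :=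
        Subtype.ext (Units.ext (by rw [unit0_coe (hS0 _ hγS)]; exact hcase))
      rw [hyeq]; exact hSp γ hγS
    · have hγ0 : γ ≠ 0 := hS0 _ hγS
      have hy' : y = ⟨unit0 (q : ℂ), hqG⟩ * (⟨unit0 γ, hSG _ hγS⟩ : ↥G)⁻¹ := by
        apply Subtype.ext
        apply Units.ext
        simp only [Subgroup.coe_mul, Subgroup.coe_inv, Units.val_mul,
          Units.val_inv_eq_inv_val, unit0_coe hq0, unit0_coe hγ0]
        rw [← div_eq_mul_inv]
        exact hcase
      rw [hy']
      show L (Additive.ofMul _) ∈ p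
      rw [ofMul_mul, ofMul_inv, map_add, map_neg]
      exact add_mem hvq (neg_mem (hSp γ hγS))
    · have hy2 : y ^ 2 = ⟨unit0 (q : ℂ), hqG⟩ := by
        apply Subtype.ext
        apply Units.ext
        simp only [SubmonoidClass.coe_pow, Units.val_pow_eq_pow_val, unit0_coe hq0]
        exact hcase
      have h2 : (2 : ℕ) • ((1 : ℚ) ⊗ₜ[ℤ] Additive.ofMul y) = F (q : ℂ) hqG := by
        show (2 : ℕ) • (L (Additive.ofMul y)) = _
        rw [← map_nsmul, ← ofMul_pow, hy2]
      have heq : (1 : ℚ) ⊗ₜ[ℤ] Additive.ofMul y = (((2:ℕ) : ℚ))⁻¹ • F (q : ℂ) hqG := by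
        rw [← h2, ← Nat.cast_smul_eq_nsmul ℚ, inv_smul_smul₀ (by norm_num)]
      rw [heq]
      exact p.smul_mem _ hvq
  have hall : ∀ v : V, v ∈ p := aux_span_top X p hgen
  have htop : p = ⊤ := by
    rw [Submodule.eq_top_iff']
    exact hall
  have hr1 : Module.rank ℚ p = Module.rank ℚ V := by
    rw [htop]
    exact rank_top ℚ V
  have hr2 : Module.rank ℚ p ≤ Cardinal.mk (Set.range vset) := by
    rw [hp]
    exact rank_span_le _
  have hr3 : Cardinal.mk (Set.range vset) ≤ Cardinal.mk ↥S := Cardinal.mk_range_le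
  have hr4 : Cardinal.mk ↥S = (S.card : Cardinal) := Cardinal.mk_coe_finset
  rw [← hr1, ← hr4]
  exact hr2.trans hr3

lemma aux_lb (q : ℤ) (hq : 2 ≤ q) (S : Finset ℂ) (hS0 : ∀ α ∈ S, α ≠ 0)
    (G : Subgroup ℂˣ) (hqG : unit0 (q : ℂ) ∈ G) (hSG : ∀ α ∈ S, unit0 α ∈ G)
    (hrank : Module.rank ℚ (ℚ ⊗[ℤ] Additive ↥G) ≤ (S.card : Cardinal)) :
    ∃ (f : ℂ → ℤ) (c : ℤ), (∏ α ∈ S, α ^ f α = (q : ℂ) ^ c) ∧ ∃ α ∈ S, f α ≠ 0 := by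
  classical
  have hq0 : (q : ℂ) ≠ 0 := by exact_mod_cast (show (q:ℤ) ≠ 0 by omega)
  set V := ℚ ⊗[ℤ] Additive ↥G with hV
  let L : Additive ↥G →ₗ[ℤ] V := TensorProduct.mk ℤ ℚ (Additive ↥G) 1
  set m := S.card with hm
  let es : Fin m → ℂ := fun i => ((S.equivFin.symm i : ↥S) : ℂ)
  have hes : ∀ i, es i ∈ S := fun i => (S.equivFin.symm i).2
  let x : Fin (m + 1) → Additive ↥G :=
    Fin.cons (Additive.ofMul (⟨unit0 (q : ℂ), hqG⟩ : ↥G))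
      (fun i => Additive.ofMul (⟨unit0 (es i), hSG _ (hes i)⟩ : ↥G))
  have hx0' : x 0 = Additive.ofMul (⟨unit0 (q : ℂ), hqG⟩ : ↥G) := rfl
  have hxs' : ∀ i : Fin m, x i.succ = Additive.ofMul (⟨unit0 (es i), hSG _ (hes i)⟩ : ↥G) :=
    fun i => Fin.cons_succ _ _ i
  let v : Fin (m + 1) → V := fun i => L (x i)
  have hnli : ¬ LinearIndependent ℚ v := by
    intro hli
    have h1 := hli.cardinal_le_rank
    rw [Cardinal.mk_fin] at h1
    have h2 := h1.trans hrank
    rw [Nat.cast_le] at h2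
    omega
  obtain ⟨g, hgsum, i₀, hgi₀⟩ := Fintype.not_linearIndependent_iff.mp hnli
  obtain ⟨b, hb⟩ := IsLocalization.exist_integer_multiples (nonZeroDivisors ℤ) Finset.univ g
  choose a ha using fun i => hb i (Finset.mem_univ i)
  have hbne : ((b : ℤ) : ℚ) ≠ 0 := by
    exact_mod_cast nonZeroDivisors.coe_ne_zero b
  have haq : ∀ i, ((a i : ℚ)) = ((b : ℤ) : ℚ) * g i := by
    intro i
    have h := ha i
    rwa [algebraMap_int_eq, eq_intCast, zsmul_eq_mul] at h
  have hai₀ : a i₀ ≠ 0 := by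
    intro hc
    apply mul_ne_zero hbne hgi₀
    rw [← haq i₀, hc, Int.cast_zero]
  set w : Additive ↥G := ∑ i, a i • x i with hw
  have hLw : (1 : ℚ) ⊗ₜ[ℤ] w = 0 := by
    have hLw' : L w = 0 := by
      rw [hw, map_sum]
      calc ∑ i, L (a i • x i) = ∑ i, a i • v i := by
            apply Finset.sum_congr rfl
            intro i _
            rw [map_zsmul]
        _ = ∑ i, ((b : ℤ) : ℚ) • (g i • v i) := by
            apply Finset.sum_congr rfl
            intro i _
            rw [← Int.cast_smul_eq_zsmul ℚ, haq, mul_smul]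
        _ = ((b : ℤ) : ℚ) • ∑ i, g i • v i := (Finset.smul_sum).symm
        _ = 0 := by rw [hgsum, smul_zero]
    exact hLw'
  obtain ⟨n, hn0, hnw⟩ := aux_torsion w hLw
  have hsum0 : ∑ i, (n * a i) • x i = (0 : Additive ↥G) := by
    have h₁ : n • ∑ i, a i • x i = ∑ i, n • (a i • x i) := aux_zsmul_sum _ n _
    calc ∑ i, (n * a i) • x i = ∑ i, n • (a i • x i) := by
          apply Finset.sum_congr rfl
          intro i _
          rw [mul_smul]
      _ = n • ∑ i, a i • x i := h₁.symm
      _ = 0 := by rw [← hw]; exact hnw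
  have hmul : (∏ i, (Additive.toMul (x i)) ^ (n * a i)) = (1 : ↥G) := by
    have h := congrArg Additive.toMul hsum0
    rw [toMul_sum] at h
    simp only [toMul_zsmul] at h
    simpa using h
  let χ : ↥G →* ℂ := (Units.coeHom ℂ).comp G.subtype
  have hχ : ∀ y : ↥G, χ y = ((y : ℂˣ) : ℂ) := fun y => rfl
  have hC : (∏ i : Fin (m + 1), (χ (Additive.toMul (x i))) ^ (n * a i)) = 1 := by
    have h := congrArg χ hmul
    rw [map_prod, map_one] at h
    simpa only [map_zpow] using h
  have hx0 : χ (Additive.toMul (x 0)) = (q : ℂ) := by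
    rw [hx0', toMul_ofMul, hχ]
    exact unit0_coe hq0
  have hxs : ∀ i : Fin m, χ (Additive.toMul (x i.succ)) = es i := by
    intro i
    rw [hxs' i, toMul_ofMul, hχ]
    exact unit0_coe (hS0 _ (hes i))
  rw [Fin.prod_univ_succ, hx0] at hC
  have hC' : (q : ℂ) ^ (n * a 0) * (∏ i : Fin m, (es i) ^ (n * a i.succ)) = 1 := by
    rw [← hC]
    congr 1
    apply Finset.prod_congr rfl
    intro i _
    rw [hxs i]
  have hidx : ∀ i : Fin m, S.equivFin ⟨es i, hes i⟩ = i := by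
    intro i
    have h : (⟨es i, hes i⟩ : ↥S) = S.equivFin.symm i := Subtype.ext rfl
    rw [h, Equiv.apply_symm_apply]
  set f' : ℂ → ℤ := fun z => if hz : z ∈ S then n * a (Fin.succ (S.equivFin ⟨z, hz⟩)) else 0
    with hf'
  have hf'S : ∀ z (hz : z ∈ S), f' z = n * a (Fin.succ (S.equivFin ⟨z, hz⟩)) := by
    intro z hz
    rw [hf']
    exact dif_pos hz
  by_cases hex : ∃ i : Fin m, n * a i.succ ≠ 0
  · obtain ⟨j, hj⟩ := hex
    refine ⟨f', -(n * a 0), ?_, ?_⟩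
    · have heq : ∏ α ∈ S, α ^ f' α = ∏ i : Fin m, (es i) ^ (n * a i.succ) := by
        rw [← aux_prod_enum S (fun z => z ^ f' z)]
        apply Finset.prod_congr rfl
        intro i _
        rw [hf'S _ (hes i), hidx i]
      rw [heq]
      have h := eq_inv_of_mul_eq_one_right hC'
      rw [h, ← zpow_neg]
    · refine ⟨es j, hes j, ?_⟩
      rw [hf'S _ (hes j), hidx j]
      exact hj
  · exfalso
    push_neg at hex
    have hasucc : ∀ i : Fin m, a i.succ = 0 := by
      intro i
      rcases mul_eq_zero.mp (hex i) with h | h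
      · exact absurd h hn0
      · exact h
    have hi₀0 : i₀ = 0 := by
      rcases Fin.eq_zero_or_eq_succ i₀ with h | ⟨j, hj⟩
      · exact h
      · exfalso; exact hai₀ (by rw [hj]; exact hasucc j)
    have ha00 : a 0 ≠ 0 := hi₀0 ▸ hai₀
    have hprod1 : (∏ i : Fin m, (es i) ^ (n * a i.succ)) = 1 := by
      apply Finset.prod_eq_one
      intro i _
      rw [hasucc i, mul_zero, zpow_zero]
    rw [hprod1, mul_one] at hC'
    exact mul_ne_zero hn0 ha00 (aux_qpow_eq_one q hq hC')

/-- Assume `R` is not small. Then the following are equivalent: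
(1a) there is a nontrivial admissible function on `R`;
(1b) there is a nontrivial admissible function on `R` vanishing identically on `R^ι`;
(2a) there is a reduced admissible function on `R`;
(2b) there is a reduced admissible function on `R` vanishing identically on `R^ι`;
(3a) the rank of `Γ` (the subgroup of `ℂˣ` generated by `R`) is at most `⌊#R/2⌋`;
(3b) the rank of `Γ₁` (the subgroup generated by `q` and `R ∖ R^ι`) is at most `⌊#R/2⌋`. -/
theorem stmt_10 (q : ℤ) (hq : 2 ≤ q) (R : Finset ℂ) (hRne : R.Nonempty)
    (hR0 : ∀ α ∈ R, α ≠ 0)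
    (habs : ∀ α ∈ R, ‖α‖ ^ 2 = (q : ℝ))
    (hconj : ∀ α ∈ R, (q : ℂ) / α ∈ R)
    (hnotsmall : ∀ α₁ ∈ R, ∀ α₂ ∈ R, α₁ ≠ α₂ → ∀ n : ℕ, 0 < n → (α₁ / α₂) ^ n ≠ 1) :
    List.TFAE
      [ (∃ e : ℂ → ℤ, AdmissibleFn q R e ∧ ¬ TrivialFn q R e),
        (∃ e : ℂ → ℤ, AdmissibleFn q R e ∧ ¬ TrivialFn q R e ∧
          ∀ β ∈ R, β ^ 2 = (q : ℂ) → e β = 0),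
        (∃ e : ℂ → ℤ, ReducedAdmissible q R e),
        (∃ e : ℂ → ℤ, ReducedAdmissible q R e ∧ ∀ β ∈ R, β ^ 2 = (q : ℂ) → e β = 0),
        subgroupRank (Subgroup.closure {x : ℂˣ | (x : ℂ) ∈ R}) ≤ ((R.card / 2 : ℕ) : Cardinal),
        subgroupRank (Subgroup.closure
            {x : ℂˣ | (x : ℂ) = (q : ℂ) ∨ ((x : ℂ) ∈ R ∧ (x : ℂ) ^ 2 ≠ (q : ℂ))}) ≤
          ((R.card / 2 : ℕ) : Cardinal) ] := by
  classical
  have hq0C : (q : ℂ) ≠ 0 := by exact_mod_cast (show (q:ℤ) ≠ 0 by omega)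
  set Rι := R.filter (fun β => β ^ 2 = (q:ℂ)) with hRιdef
  set T := R \ Rι with hTdef
  have hRιsub : Rι ⊆ R := Finset.filter_subset _ _
  have hmemRι : ∀ β, β ∈ Rι ↔ β ∈ R ∧ β ^ 2 = (q:ℂ) := by
    intro β; rw [hRιdef, Finset.mem_filter]
  have hmemT : ∀ α, α ∈ T ↔ α ∈ R ∧ α ^ 2 ≠ (q:ℂ) := by
    intro α
    rw [hTdef, Finset.mem_sdiff, hRιdef, Finset.mem_filter]
    tauto
  have hRιcard : Rι.card ≤ 1 := by
    rw [Finset.card_le_one]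
    intro β₁ h₁ β₂ h₂
    by_contra hne
    obtain ⟨hβ₁R, hβ₁⟩ := (hmemRι β₁).mp h₁
    obtain ⟨hβ₂R, hβ₂⟩ := (hmemRι β₂).mp h₂
    refine hnotsmall β₁ hβ₁R β₂ hβ₂R hne 2 (by norm_num) ?_
    rw [div_pow, hβ₁, hβ₂, div_self hq0C]
  have hdd : ∀ {α : ℂ}, α ≠ 0 → (q:ℂ) / ((q:ℂ)/α) = α := by
    intro α h; field_simp
  have hsq : ∀ {α : ℂ}, α ∈ R → ((q:ℂ)/α = α ↔ α^2 = (q:ℂ)) := by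
    intro α hα
    have hα0 : α ≠ 0 := hR0 α hα
    constructor
    · intro h
      have h2 := div_mul_cancel₀ (q:ℂ) hα0
      rw [h] at h2
      rw [sq]
      exact h2
    · intro h
      rw [← h, sq, mul_div_assoc, div_self hα0, mul_one]
  have hTinv : ∀ α ∈ T, (q:ℂ)/α ∈ T := by
    intro α hα
    obtain ⟨hαR, hα2⟩ := (hmemT α).mp hα
    have hα0 : α ≠ 0 := hR0 α hαR
    refine (hmemT _).mpr ⟨hconj α hαR, ?_⟩
    intro hc
    apply hα2
    have h1 : (q:ℂ)/((q:ℂ)/α) = (q:ℂ)/α := (hsq (hconj α hαR)).mpr hc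
    rw [hdd hα0] at h1
    
    exact (hsq hαR).mp h1.symm
  have hTfp : ∀ α ∈ T, (q:ℂ)/α ≠ α := by
    intro α hα
    obtain ⟨hαR, hα2⟩ := (hmemT α).mp hα
    exact fun hc => hα2 ((hsq hαR).mp hc)
  obtain ⟨S, hSsubT, hScov, hSdisj, hTcard⟩ := aux_half (q:ℂ) T.card T rfl
    (fun α hα => hR0 _ ((hmemT α).mp hα).1) hTinv hTfp
  have hSR : ∀ α ∈ S, α ∈ R := fun α hα => ((hmemT α).mp (hSsubT hα)).1
  have hS0 : ∀ α ∈ S, α ≠ 0 := fun α hα => hR0 α (hSR α hα)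
  have hS2 : ∀ α ∈ S, α ^ 2 ≠ (q:ℂ) := fun α hα => ((hmemT α).mp (hSsubT hα)).2
  have hcard2 : R.card = 2 * S.card + Rι.card := by
    have h1 : T.card = R.card - Rι.card := by rw [hTdef]; exact Finset.card_sdiff_of_subset hRιsub
    have h2 := Finset.card_le_card hRιsub
    omega
  have hhalf : R.card / 2 = S.card := by omega
  -- reindexing by the involution
  have hreidxR : ∀ g : ℂ → ℂ, ∏ x ∈ R, g x = ∏ x ∈ R, g ((q:ℂ)/x) := by
    intro g
    refine Finset.prod_nbij' (fun α => (q:ℂ)/α) (fun α => (q:ℂ)/α)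
      (fun a ha => hconj a ha) (fun a ha => hconj a ha)
      (fun a ha => hdd (hR0 a ha)) (fun a ha => hdd (hR0 a ha))
      (fun a ha => by rw [hdd (hR0 a ha)])
  -- product splitting
  have hprodS : ∀ g : ℂ → ℂ, ∏ x ∈ T, g x = (∏ x ∈ S, g x) * ∏ x ∈ S, g ((q:ℂ)/x) := by
    intro g
    have himg : T = S ∪ S.image (fun α => (q:ℂ)/α) := by
      apply Finset.ext
      intro x
      constructor
      · intro hx
        rcases hScov x hx with h | h
        · exact Finset.mem_union_left _ h
        · refine Finset.mem_union_right _ (Finset.mem_image.mpr ⟨(q:ℂ)/x, h, ?_⟩)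
          exact hdd (hR0 x ((hmemT x).mp hx).1)
      · intro hx
        rcases Finset.mem_union.mp hx with h | h
        · exact hSsubT h
        · obtain ⟨γ, hγ, rfl⟩ := Finset.mem_image.mp h
          exact hTinv γ (hSsubT hγ)
    have hdisj : Disjoint S (S.image (fun α => (q:ℂ)/α)) := by
      rw [Finset.disjoint_left]
      intro x hxS hximg
      obtain ⟨γ, hγ, hγx⟩ := Finset.mem_image.mp hximg
      apply hSdisj x hxS
      rw [← hγx, hdd (hS0 γ hγ)]
      exact hγ
    have hinj : Set.InjOn (fun α => (q:ℂ)/α) S := by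
      intro a ha b hb hab
      have : (q:ℂ)/((q:ℂ)/a) = (q:ℂ)/((q:ℂ)/b) := by
        simp only at hab
        rw [hab]
      rwa [hdd (hS0 a ha), hdd (hS0 b hb)] at this
    rw [himg, Finset.prod_union hdisj, Finset.prod_image (fun a ha b hb hab => hinj ha hb hab)]
  have hsumS : ∀ g : ℂ → ℤ, ∑ x ∈ T, g x = (∑ x ∈ S, g x) + ∑ x ∈ S, g ((q:ℂ)/x) := by
    intro g
    have himg : T = S ∪ S.image (fun α => (q:ℂ)/α) := by
      apply Finset.ext
      intro x
      constructor
      · intro hx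
        rcases hScov x hx with h | h
        · exact Finset.mem_union_left _ h
        · refine Finset.mem_union_right _ (Finset.mem_image.mpr ⟨(q:ℂ)/x, h, ?_⟩)
          exact hdd (hR0 x ((hmemT x).mp hx).1)
      · intro hx
        rcases Finset.mem_union.mp hx with h | h
        · exact hSsubT h
        · obtain ⟨γ, hγ, rfl⟩ := Finset.mem_image.mp h
          exact hTinv γ (hSsubT hγ)
    have hdisj : Disjoint S (S.image (fun α => (q:ℂ)/α)) := by
      rw [Finset.disjoint_left]
      intro x hxS hximg
      obtain ⟨γ, hγ, hγx⟩ := Finset.mem_image.mp hximg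
      apply hSdisj x hxS
      rw [← hγx, hdd (hS0 γ hγ)]
      exact hγ
    have hinj : ∀ a ∈ S, ∀ b ∈ S, (q:ℂ)/a = (q:ℂ)/b → a = b := by
      intro a ha b hb hab
      have h2 : (q:ℂ)/((q:ℂ)/a) = (q:ℂ)/((q:ℂ)/b) := by rw [hab]
      rwa [hdd (hS0 a ha), hdd (hS0 b hb)] at h2
    rw [himg, Finset.sum_union hdisj, Finset.sum_image hinj]
  have hprodR : ∀ g : ℂ → ℂ,
      ∏ x ∈ R, g x = ((∏ x ∈ S, g x) * ∏ x ∈ S, g ((q:ℂ)/x)) * ∏ x ∈ Rι, g x := by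
    intro g
    rw [← hprodS g, hTdef, Finset.prod_sdiff hRιsub]
  have hsumR : ∀ g : ℂ → ℤ,
      ∑ x ∈ R, g x = ((∑ x ∈ S, g x) + ∑ x ∈ S, g ((q:ℂ)/x)) + ∑ x ∈ Rι, g x := by
    intro g
    rw [← hsumS g, hTdef, Finset.sum_sdiff hRιsub]
  -- the pivot condition
  set K : Prop := ∃ f : ℂ → ℤ, ∃ c : ℤ,
    (∏ α ∈ S, α ^ f α = (q:ℂ)^c) ∧ ∃ α ∈ S, f α ≠ 0 with hKdef
  -- (1a) → K
  have h1K : (∃ e : ℂ → ℤ, AdmissibleFn q R e ∧ ¬ TrivialFn q R e) → K := by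
    rintro ⟨e, ⟨d, hprod⟩, hnt⟩
    by_cases hhat : ∃ α ∈ R, e α - e ((q:ℂ)/α) ≠ 0
    · obtain ⟨α₁, hα₁R, hα₁⟩ := hhat
      set eh : ℂ → ℤ := fun x => e x - e ((q:ℂ)/x) with hehdef
      set Se : ℤ := ∑ x ∈ R, e x with hSedef
      -- key identity : (∏ x^eh) * q^Σ = q^d * q^d
      have hkey : (∏ x ∈ R, x ^ eh x) * (∏ x ∈ R, x ^ e ((q:ℂ)/x)) = ∏ x ∈ R, x ^ e x := by
        rw [← Finset.prod_mul_distrib]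
        apply Finset.prod_congr rfl
        intro x hx
        rw [← zpow_add₀ (hR0 x hx)]
        congr 1
        have h2 : eh x = e x - e ((q:ℂ)/x) := rfl
        omega
      have hB : (∏ x ∈ R, x ^ e ((q:ℂ)/x)) * (∏ x ∈ R, x ^ e x) = (q:ℂ) ^ Se := by
        have h1 : ∏ x ∈ R, x ^ e ((q:ℂ)/x) = ∏ x ∈ R, ((q:ℂ)/x) ^ e x := by
          rw [hreidxR (fun x => x ^ e ((q:ℂ)/x))]
          apply Finset.prod_congr rfl
          intro x hx
          rw [hdd (hR0 x hx)]
        rw [h1, ← Finset.prod_mul_distrib]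
        rw [hSedef, ← aux_prod_zpow hq0C R e]
        apply Finset.prod_congr rfl
        intro x hx
        rw [← mul_zpow, div_mul_cancel₀ _ (hR0 x hx)]
      have hE : ∏ x ∈ R, x ^ eh x = (q:ℂ) ^ (2*d - Se) := by
        have h1 : (∏ x ∈ R, x ^ eh x) * (q:ℂ) ^ Se = (q:ℂ) ^ (2*d) := by
          calc (∏ x ∈ R, x ^ eh x) * (q:ℂ) ^ Se
              = (∏ x ∈ R, x ^ eh x) * ((∏ x ∈ R, x ^ e ((q:ℂ)/x)) * (∏ x ∈ R, x ^ e x)) := by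
                rw [hB]
            _ = ((∏ x ∈ R, x ^ eh x) * (∏ x ∈ R, x ^ e ((q:ℂ)/x))) * (∏ x ∈ R, x ^ e x) := by
                ring
            _ = (∏ x ∈ R, x ^ e x) * (∏ x ∈ R, x ^ e x) := by rw [hkey]
            _ = (q:ℂ) ^ (2*d) := by rw [hprod, ← zpow_add₀ hq0C]; congr 1; ring
        have h2 : (q:ℂ) ^ (2*d) = (q:ℂ) ^ (2*d - Se) * (q:ℂ) ^ Se := by
          rw [← zpow_add₀ hq0C]
          congr 1
          ring
        rw [h2] at h1
        exact mul_right_cancel₀ (zpow_ne_zero _ hq0C) h1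
      -- split the product over R
      have hehβ : ∀ β ∈ Rι, eh β = 0 := by
        intro β hβ
        obtain ⟨hβR, hβ2⟩ := (hmemRι β).mp hβ
        have h1 : eh β = e β - e ((q:ℂ)/β) := rfl
        rw [(hsq hβR).mpr hβ2] at h1
        omega
      have hehσ : ∀ x ∈ S, eh ((q:ℂ)/x) = - eh x := by
        intro x hx
        have h1 : eh ((q:ℂ)/x) = e ((q:ℂ)/x) - e ((q:ℂ)/((q:ℂ)/x)) := rfl
        rw [hdd (hS0 x hx)] at h1
        have h2 : eh x = e x - e ((q:ℂ)/x) := rfl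
        omega
      set D : ℤ := ∑ x ∈ S, eh x with hDdef
      have hsplit : (∏ x ∈ S, x ^ eh x) * (∏ x ∈ S, x ^ eh x) = (q:ℂ) ^ (2*d - Se + D) := by
        have h1 := hprodR (fun x => x ^ eh x)
        rw [hE] at h1
        have h2 : ∏ x ∈ Rι, x ^ eh x = 1 :=
          Finset.prod_eq_one (fun β hβ => by rw [hehβ β hβ, zpow_zero])
        have h3 : ∏ x ∈ S, ((q:ℂ)/x) ^ eh ((q:ℂ)/x)
            = ((q:ℂ) ^ (-D)) * ∏ x ∈ S, x ^ eh x := by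
          have h4 : ∀ x ∈ S, ((q:ℂ)/x) ^ eh ((q:ℂ)/x) = ((q:ℂ))^(-eh x) * x ^ eh x := by
            intro x hx
            rw [hehσ x hx, div_zpow, div_eq_mul_inv, ← zpow_neg, neg_neg]
          rw [Finset.prod_congr rfl h4, Finset.prod_mul_distrib,
            aux_prod_zpow hq0C S (fun x => - eh x)]
          congr 2
          rw [hDdef, ← Finset.sum_neg_distrib]
        rw [h2, mul_one, h3] at h1
        -- h1 : q^(2d-Σ) = (∏_S x^eh) * (q^(-D) * ∏_S x^eh)
        have h5 : ((∏ x ∈ S, x ^ eh x) * (∏ x ∈ S, x ^ eh x)) * (q:ℂ)^(-D)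
            = (q:ℂ) ^ (2*d - Se) := by
          rw [h1]; ring
        have h6 := congrArg (fun z => z * (q:ℂ)^D) h5
        rw [mul_assoc, ← zpow_add₀ hq0C, neg_add_cancel, zpow_zero, mul_one] at h6
        rw [h6, ← zpow_add₀ hq0C]
      refine ⟨fun x => 2 * eh x, 2*d - Se + D, ?_, ?_⟩
      · show ∏ α ∈ S, α ^ (2 * eh α) = _
        rw [← hsplit, ← Finset.prod_mul_distrib]
        apply Finset.prod_congr rfl
        intro x hx
        rw [← zpow_add₀ (hS0 x hx)]
        congr 1
        ring
      · -- witness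
        have hα₁T : α₁ ∈ T := by
          refine (hmemT α₁).mpr ⟨hα₁R, ?_⟩
          intro hc
          apply hα₁
          rw [(hsq hα₁R).mpr hc]
          omega
        rcases hScov α₁ hα₁T with h | h
        · refine ⟨α₁, h, ?_⟩
          show 2 * eh α₁ ≠ 0
          have h2 : eh α₁ = e α₁ - e ((q:ℂ)/α₁) := rfl
          omega
        · refine ⟨(q:ℂ)/α₁, h, ?_⟩
          show 2 * eh ((q:ℂ)/α₁) ≠ 0
          have h7 : eh ((q:ℂ)/α₁) = e ((q:ℂ)/α₁) - e ((q:ℂ)/((q:ℂ)/α₁)) := rfl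
          rw [hdd (hR0 α₁ hα₁R)] at h7
          omega
    · -- symmetric case : contradiction with nontriviality
      exfalso
      push_neg at hhat
      have hsym : ∀ α ∈ R, e α = e ((q:ℂ)/α) := by
        intro α hα
        have := hhat α hα
        omega
      apply hnt
      constructor
      · exact hsym
      · -- parity
        intro β hβR hβ2
        have hβRι : β ∈ Rι := (hmemRι β).mpr ⟨hβR, hβ2⟩
        have hRιeq : Rι = {β} := by
          apply Finset.eq_singleton_iff_unique_mem.mpr
          exact ⟨hβRι, fun x hx => Finset.card_le_one.mp hRιcard x hx β hβRι⟩
        have hSe2d : ∑ x ∈ R, e x = 2 * d := aux_sum_eq q hq R habs e d hprod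
        have hSesplit := hsumR e
        have hs2 : ∑ x ∈ S, e ((q:ℂ)/x) = ∑ x ∈ S, e x :=
          Finset.sum_congr rfl (fun x hx => (hsym x (hSR x hx)).symm)
        rw [hs2, hRιeq, Finset.sum_singleton] at hSesplit
        exact ⟨d - ∑ x ∈ S, e x, by omega⟩
    -- K → (2b) (item 4)
  have hK4 : K → (∃ e : ℂ → ℤ, ReducedAdmissible q R e ∧
      ∀ β ∈ R, β ^ 2 = (q : ℂ) → e β = 0) := by
    rintro ⟨f, c, hrel, α₀, hα₀S, hfα₀⟩
    set e : ℂ → ℤ := fun x => if x ∈ S then max (f x) 0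
      else if (q:ℂ)/x ∈ S then max (-(f ((q:ℂ)/x))) 0 else 0 with hedef
    have heS : ∀ x ∈ S, e x = max (f x) 0 := by
      intro x hx
      show (if x ∈ S then max (f x) 0 else _) = _
      rw [if_pos hx]
    have heImg : ∀ x ∈ S, e ((q:ℂ)/x) = max (-(f x)) 0 := by
      intro x hx
      have hx0 := hS0 x hx
      have h1 : (q:ℂ)/x ∉ S := hSdisj x hx
      have h2 : (q:ℂ)/((q:ℂ)/x) = x := hdd hx0
      show (if (q:ℂ)/x ∈ S then _ else if (q:ℂ)/((q:ℂ)/x) ∈ S then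
        max (-(f ((q:ℂ)/((q:ℂ)/x)))) 0 else 0) = _
      rw [if_neg h1, h2, if_pos hx]
    have heβ : ∀ β ∈ R, β ^ 2 = (q:ℂ) → e β = 0 := by
      intro β hβR hβ2
      have hββ : (q:ℂ)/β = β := (hsq hβR).mpr hβ2
      have hβS : β ∉ S := fun hc => (hS2 β hc) hβ2
      show (if β ∈ S then _ else if (q:ℂ)/β ∈ S then _ else 0) = 0
      rw [if_neg hβS, hββ, if_neg hβS]
    set d : ℤ := c + ∑ x ∈ S, max (-(f x)) 0 with hddef
    have hprode : ∏ x ∈ R, x ^ e x = (q:ℂ) ^ d := by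
      rw [hprodR (fun x => x ^ e x)]
      have h1 : ∏ x ∈ Rι, x ^ e x = 1 := Finset.prod_eq_one (fun β hβ => by
        obtain ⟨hβR, hβ2⟩ := (hmemRι β).mp hβ
        rw [heβ β hβR hβ2, zpow_zero])
      have h2 : ∀ x ∈ S, x ^ e x * ((q:ℂ)/x) ^ e ((q:ℂ)/x)
          = x ^ f x * (q:ℂ) ^ (max (-(f x)) 0) := by
        intro x hx
        have hx0 := hS0 x hx
        rw [heS x hx, heImg x hx]
        rcases le_or_gt 0 (f x) with h | h
        · rw [max_eq_left h, max_eq_right (by omega : -(f x) ≤ 0), zpow_zero, zpow_zero,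
            mul_one]
        · rw [max_eq_right h.le, max_eq_left (by omega : (0:ℤ) ≤ -(f x)), zpow_zero, one_mul]
          rw [div_zpow, div_eq_mul_inv, ← zpow_neg, neg_neg, mul_comm]
      rw [h1, mul_one, ← Finset.prod_mul_distrib, Finset.prod_congr rfl h2,
        Finset.prod_mul_distrib, hrel, aux_prod_zpow hq0C S (fun x => max (-(f x)) 0),
        ← zpow_add₀ hq0C]
    have hsum2d : ∑ x ∈ R, e x = 2 * d := aux_sum_eq q hq R habs e d hprode
    have hepos : ∀ x ∈ R, 0 ≤ e x := by
      intro x _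
      show 0 ≤ (if x ∈ S then max (f x) 0 else if (q:ℂ)/x ∈ S then max (-(f ((q:ℂ)/x))) 0 else 0)
      split_ifs with h1 h2
      · exact le_max_right _ _
      · exact le_max_right _ _
      · exact le_refl 0
    have hd1 : 1 ≤ d := by
      have hwit : ∃ x ∈ R, 1 ≤ e x := by
        rcases le_or_gt (f α₀) 0 with h | h
        · refine ⟨(q:ℂ)/α₀, hconj _ (hSR _ hα₀S), ?_⟩
          rw [heImg _ hα₀S, max_eq_left (by omega : (0:ℤ) ≤ -(f α₀))]
          omega
        · refine ⟨α₀, hSR _ hα₀S, ?_⟩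
          rw [heS _ hα₀S, max_eq_left h.le]
          omega
      obtain ⟨x₀, hx₀R, hx₀⟩ := hwit
      have h3 : (1:ℤ) ≤ ∑ x ∈ R, e x :=
        le_trans hx₀ (Finset.single_le_sum (fun x hx => hepos x hx) hx₀R)
      omega
    refine ⟨e, ⟨d, hprode, hd1, hepos, ?_, ?_⟩, heβ⟩
    · intro α hαR hα2
      have hαT : α ∈ T := (hmemT α).mpr ⟨hαR, hα2⟩
      rcases hScov α hαT with hαS | hqαS
      · rw [heS _ hαS, heImg _ hαS]
        rcases le_or_gt (f α) 0 with h | h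
        · left; rw [max_eq_right h]
        · right; rw [max_eq_right (by omega : -(f α) ≤ 0)]
      · have hα0 := hR0 α hαR
        have h1 := heImg _ hqαS
        rw [hdd hα0] at h1
        have h2 := heS _ hqαS
        rw [h1, h2]
        rcases le_or_gt (f ((q:ℂ)/α)) 0 with h | h
        · right; rw [max_eq_right h]
        · left; rw [max_eq_right (by omega : -(f ((q:ℂ)/α)) ≤ 0)]
    · intro β hβR hβ2
      left
      exact heβ β hβR hβ2
  -- reduced (+vanishing) implies nontrivial
  have hred_nt : ∀ e : ℂ → ℤ, ReducedAdmissible q R e →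
      (∃ d : ℤ, ∏ α ∈ R, α ^ e α = (q : ℂ) ^ d) ∧ ¬ TrivialFn q R e := by
    rintro e ⟨d, hprod, hd1, hpos, hpair, hβ01⟩
    refine ⟨⟨d, hprod⟩, ?_⟩
    rintro ⟨hsym, heven⟩
    have hzero : ∀ x ∈ R, e x = 0 := by
      intro x hx
      by_cases hx2 : x ^ 2 = (q:ℂ)
      · rcases hβ01 x hx hx2 with h | h
        · exact h
        · exfalso
          have := heven x hx hx2
          rw [h] at this
          exact (Int.not_odd_iff_even.mpr this) (by decide)
      · rcases hpair x hx hx2 with h | h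
        · exact h
        · rw [hsym x hx, h]
    have h1 : ∏ x ∈ R, x ^ e x = 1 :=
      Finset.prod_eq_one (fun x hx => by rw [hzero x hx, zpow_zero])
    rw [h1] at hprod
    have := aux_qpow_eq_one q hq hprod.symm
    omega
  -- K ↔ (3a)
  have hqT0 : ((q:ℤ):ℂ) ≠ 0 := hq0C
  have h5K : (subgroupRank (Subgroup.closure {x : ℂˣ | (x : ℂ) ∈ R})
      ≤ ((R.card / 2 : ℕ) : Cardinal)) ↔ K := by
    have hqmem : unit0 ((q:ℤ):ℂ) ∈ Subgroup.closure {x : ℂˣ | (x : ℂ) ∈ R} := by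
      obtain ⟨ρ, hρ⟩ := hRne
      have hρ0 : ρ ≠ 0 := hR0 ρ hρ
      have hqρ0 : (q:ℂ)/ρ ≠ 0 := div_ne_zero hq0C hρ0
      have hsplit : unit0 ((q:ℤ):ℂ) = unit0 ((q:ℂ)/ρ) * unit0 ρ := by
        apply Units.ext
        rw [Units.val_mul, unit0_coe hq0C, unit0_coe hqρ0, unit0_coe hρ0,
          div_mul_cancel₀ _ hρ0]
      rw [hsplit]
      exact Subgroup.mul_mem _
        (Subgroup.subset_closure (by rw [Set.mem_setOf_eq, unit0_coe hqρ0]; exact hconj ρ hρ))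
        (Subgroup.subset_closure (by rw [Set.mem_setOf_eq, unit0_coe hρ0]; exact hρ))
    have hSmem : ∀ α ∈ S, unit0 α ∈ Subgroup.closure {x : ℂˣ | (x : ℂ) ∈ R} :=
      fun α hα => Subgroup.subset_closure
        (by rw [Set.mem_setOf_eq, unit0_coe (hS0 α hα)]; exact hSR α hα)
    constructor
    · intro h
      rw [hKdef]
      refine aux_lb q hq S hS0 _ hqmem hSmem ?_
      rw [← hhalf]
      exact h
    · rintro ⟨f, c, hrel, α₀, hα₀S, hfα₀⟩
      show Module.rank ℚ _ ≤ _
      rw [hhalf]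
      exact aux_ub q hq S hS0 _ hqmem hSmem
        (by
          intro x hx
          rw [Set.mem_setOf_eq] at hx
          by_cases hx2 : ((x:ℂ))^2 = (q:ℂ)
          · exact Or.inr (Or.inr hx2)
          · have hxT : (x:ℂ) ∈ T := (hmemT _).mpr ⟨hx, hx2⟩
            rcases hScov _ hxT with h | h
            · exact Or.inr (Or.inl ⟨(x:ℂ), h, Or.inl rfl⟩)
            · refine Or.inr (Or.inl ⟨(q:ℂ)/(x:ℂ), h, Or.inr ?_⟩)
              rw [hdd (hR0 _ hx)])
        f c hrel α₀ hα₀S hfα₀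
  -- K ↔ (3b)
  have h6K : (subgroupRank (Subgroup.closure
      {x : ℂˣ | (x : ℂ) = (q : ℂ) ∨ ((x : ℂ) ∈ R ∧ (x : ℂ) ^ 2 ≠ (q : ℂ))})
      ≤ ((R.card / 2 : ℕ) : Cardinal)) ↔ K := by
    have hqmem : unit0 ((q:ℤ):ℂ) ∈ Subgroup.closure
        {x : ℂˣ | (x : ℂ) = (q : ℂ) ∨ ((x : ℂ) ∈ R ∧ (x : ℂ) ^ 2 ≠ (q : ℂ))} :=
      Subgroup.subset_closure (Or.inl (unit0_coe hq0C))
    have hSmem : ∀ α ∈ S, unit0 α ∈ Subgroup.closure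
        {x : ℂˣ | (x : ℂ) = (q : ℂ) ∨ ((x : ℂ) ∈ R ∧ (x : ℂ) ^ 2 ≠ (q : ℂ))} := by
      intro α hα
      refine Subgroup.subset_closure (Or.inr ?_)
      rw [unit0_coe (hS0 α hα)]
      exact ⟨hSR α hα, hS2 α hα⟩
    constructor
    · intro h
      rw [hKdef]
      refine aux_lb q hq S hS0 _ hqmem hSmem ?_
      rw [← hhalf]
      exact h
    · rintro ⟨f, c, hrel, α₀, hα₀S, hfα₀⟩
      show Module.rank ℚ _ ≤ _
      rw [hhalf]
      exact aux_ub q hq S hS0 _ hqmem hSmem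
        (by
          intro x hx
          rcases hx with hx | ⟨hxR, hx2⟩
          · exact Or.inl hx
          · have hxT : (x:ℂ) ∈ T := (hmemT _).mpr ⟨hxR, hx2⟩
            rcases hScov _ hxT with h | h
            · exact Or.inr (Or.inl ⟨(x:ℂ), h, Or.inl rfl⟩)
            · refine Or.inr (Or.inl ⟨(q:ℂ)/(x:ℂ), h, Or.inr ?_⟩)
              rw [hdd (hR0 _ hxR)])
        f c hrel α₀ hα₀S hfα₀
  -- K → (1b)
  have hK2 : K → (∃ e : ℂ → ℤ, AdmissibleFn q R e ∧ ¬ TrivialFn q R e ∧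
      ∀ β ∈ R, β ^ 2 = (q : ℂ) → e β = 0) := by
    rintro ⟨f, c, hrel, α₀, hα₀S, hfα₀⟩
    obtain ⟨e, ⟨d, hprod, hd1, hpos, hpair, hβ01⟩, hvan⟩ := hK4 ⟨f, c, hrel, α₀, hα₀S, hfα₀⟩
    obtain ⟨hadm, hnt⟩ := hred_nt e ⟨d, hprod, hd1, hpos, hpair, hβ01⟩
    exact ⟨e, hadm, hnt, hvan⟩
  tfae_have 1 → 4 := fun h => hK4 (h1K h)
  tfae_have 4 → 3 := fun ⟨e, h, _⟩ => ⟨e, h⟩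
  tfae_have 3 → 1 := fun ⟨e, h⟩ => ⟨e, (hred_nt e h).1, (hred_nt e h).2⟩
  tfae_have 4 → 2 := fun ⟨e, h, hv⟩ => ⟨e, (hred_nt e h).1, (hred_nt e h).2, hv⟩
  tfae_have 2 → 1 := fun ⟨e, ha, hn, _⟩ => ⟨e, ha, hn⟩
  tfae_have 1 → 5 := fun h => h5K.mpr (h1K h)
  tfae_have 5 → 4 := fun h => hK4 (h5K.mp h)
  tfae_have 1 → 6 := fun h => h6K.mpr (h1K h)
  tfae_have 6 → 4 := fun h => hK4 (h6K.mp h)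
  tfae_finish
end

section
/- Let m and s be positive integers and let v₁, …, v_s be elements of ℚ^m. Then the set W = {u ∈ ℤ^m : every coordinate of u is nonnegative and u·v_j = 0 for all j = 1, …, s} is a finitely generated additive submonoid of ℤ^m. -/
open Finset

/-- **variant of Gordan's lemma.** For `v₁, …, v_s ∈ ℚ^m`, the set
`W = {u ∈ ℤ^m | u ≥ 0 and u · v_j = 0 for all j}` is a finitely generated additive
submonoid of `ℤ^m`: there is a finite `S ⊆ W` with `W = closure S`. -/
theorem stmt_12 (m s : ℕ) (hm : 0 < m) (hs : 0 < s) (v : Fin s → Fin m → ℚ) :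
    ∃ S : Finset (Fin m → ℤ),
      (S : Set (Fin m → ℤ)) ⊆
        {u : Fin m → ℤ | (∀ i, 0 ≤ u i) ∧ ∀ j, (∑ i, (u i : ℚ) * v j i) = 0} ∧
      {u : Fin m → ℤ | (∀ i, 0 ≤ u i) ∧ ∀ j, (∑ i, (u i : ℚ) * v j i) = 0} =
        ↑(AddSubmonoid.closure (S : Set (Fin m → ℤ))) := by
  set W : Set (Fin m → ℤ) :=
    {u : Fin m → ℤ | (∀ i, 0 ≤ u i) ∧ ∀ j, (∑ i, (u i : ℚ) * v j i) = 0} with hW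
  -- W is closed under addition and contains 0, and closed under "subtraction within W"
  have hW0 : (0 : Fin m → ℤ) ∈ W := by
    constructor
    · intro i; simp
    · intro j; simp
  have hWsub : ∀ u w : Fin m → ℤ, u ∈ W → w ∈ W → w ≤ u → u - w ∈ W := by
    intro u w hu hw hle
    constructor
    · intro i; simpa using hle i
    · intro j
      have := hu.2 j
      have h2 := hw.2 j
      have : ∑ i, ((u - w) i : ℚ) * v j i
          = (∑ i, (u i : ℚ) * v j i) - ∑ i, (w i : ℚ) * v j i := by
        rw [← Finset.sum_sub_distrib]
        refine Finset.sum_congr rfl fun i _ => ?_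
        simp [sub_mul]
      rw [this, hu.2 j, hw.2 j, sub_zero]
  -- minimal nonzero elements of W
  set M : Set (Fin m → ℤ) :=
    {u | u ∈ W ∧ u ≠ 0 ∧ ∀ w ∈ W, w ≤ u → w = 0 ∨ w = u} with hM
  have hMW : M ⊆ W := fun u hu => hu.1
  -- M is finite
  have hMfin : M.Finite := by
    set g : (Fin m → ℤ) → (Fin m → ℕ) := fun u i => (u i).toNat with hg
    have hinj : Set.InjOn g M := by
      intro u hu w hw h
      funext i
      have hui : ((u i).toNat : ℤ) = u i := Int.toNat_of_nonneg (hu.1.1 i)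
      have hwi : ((w i).toNat : ℤ) = w i := Int.toNat_of_nonneg (hw.1.1 i)
      rw [← hui, ← hwi]
      exact_mod_cast congrFun h i
    have hanti : IsAntichain (· ≤ ·) (g '' M) := by
      rintro a ⟨u, hu, rfl⟩ b ⟨w, hw, rfl⟩ hne hle
      have hule : u ≤ w := by
        intro i
        have hui : ((u i).toNat : ℤ) = u i := Int.toNat_of_nonneg (hu.1.1 i)
        have hwi : ((w i).toNat : ℤ) = w i := Int.toNat_of_nonneg (hw.1.1 i)
        rw [← hui, ← hwi]
        exact Nat.cast_le.mpr (show (u i).toNat ≤ (w i).toNat from hle i)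
      rcases hw.2.2 u hu.1 hule with h0 | heq
      · exact hu.2.1 h0
      · exact hne (by rw [heq])
    have hwo : ∀ i : Fin m, IsWellOrder ((fun _ : Fin m => ℕ) i) (· < ·) := fun _ => inferInstance
    have hpwo : (g '' M).PartiallyWellOrderedOn (· ≤ ·) :=
      Set.isPWO_of_wellQuasiOrderedLE (g '' M)
    have : (g '' M).Finite := hanti.finite_of_partiallyWellOrderedOn hpwo
    exact Set.Finite.of_finite_image this hinj
  -- every element of W is in the closure of M
  have hgen : ∀ n : ℕ, ∀ u ∈ W, (∑ i, (u i).toNat) = n →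
      u ∈ AddSubmonoid.closure M := by
    intro n
    induction n using Nat.strong_induction_on with
    | _ n ih =>
      intro u hu hn
      by_cases h0 : u = 0
      · subst h0; exact AddSubmonoid.zero_mem _
      · -- pick w ∈ W, w ≠ 0, w ≤ u minimizing the coordinate sum
        set T : Set (Fin m → ℤ) := {w | w ∈ W ∧ w ≠ 0 ∧ w ≤ u} with hT
        have hTne : u ∈ T := ⟨hu, h0, le_refl u⟩
        set N : Set ℕ := (fun w => ∑ i, (w i).toNat) '' T with hN
        have hNne : N.Nonempty := ⟨_, u, hTne, rfl⟩
        obtain ⟨k, ⟨w, hwT, hwk⟩, hkmin⟩ := wellFounded_lt.has_min N hNne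
        replace hwk : (∑ i, (w i).toNat) = k := hwk
        -- w is a minimal nonzero element of W
        have hwMin : w ∈ M := by
          refine ⟨hwT.1, hwT.2.1, ?_⟩
          intro w' hw' hle'
          by_contra hcon
          push_neg at hcon
          obtain ⟨hne0, hnew⟩ := hcon
          have hw'T : w' ∈ T := ⟨hw', hne0, le_trans hle' hwT.2.2⟩
          have hlt : (∑ i, (w' i).toNat) < ∑ i, (w i).toNat := by
            have hle_sum : (∑ i, (w' i).toNat) ≤ ∑ i, (w i).toNat := by
              refine Finset.sum_le_sum fun i _ => ?_
              exact Int.toNat_le_toNat (hle' i)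
            rcases lt_or_eq_of_le hle_sum with h | h
            · exact h
            · exfalso
              apply hnew
              funext i
              have : (w' i).toNat = (w i).toNat := by
                by_contra hne
                have hlt' : (w' i).toNat < (w i).toNat :=
                  lt_of_le_of_ne (Int.toNat_le_toNat (hle' i)) hne
                have : (∑ i, (w' i).toNat) < ∑ i, (w i).toNat := by
                  refine Finset.sum_lt_sum (fun i _ => Int.toNat_le_toNat (hle' i))
                    ⟨i, Finset.mem_univ i, hlt'⟩
                omega
              have h1 : ((w' i).toNat : ℤ) = w' i := Int.toNat_of_nonneg (hw'.1 i)
              have h2 : ((w i).toNat : ℤ) = w i := Int.toNat_of_nonneg (hwT.1.1 i)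
              rw [← h1, ← h2, this]
          have : k ≤ ∑ i, (w' i).toNat :=
            Nat.le_of_not_lt (hkmin (∑ i, (w' i).toNat) ⟨w', hw'T, rfl⟩)
          omega
        -- u - w ∈ W with smaller sum
        have huw : u - w ∈ W := hWsub u w hu hwT.1 hwT.2.2
        have hsum : (∑ i, ((u - w) i).toNat) < n := by
          have hsum_split : ∀ i, ((u - w) i).toNat + (w i).toNat = (u i).toNat := by
            intro i
            have h1 : 0 ≤ w i := hwT.1.1 i
            have h2 : w i ≤ u i := hwT.2.2 i
            have h3 : 0 ≤ u i := hu.1 i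
            simp only [Pi.sub_apply]
            omega
          have hwpos : 0 < ∑ i, (w i).toNat := by
            rcases Nat.eq_zero_or_pos (∑ i, (w i).toNat) with h | h
            · exfalso
              apply hwT.2.1
              funext i
              have h4 : (w i).toNat = 0 := (Finset.sum_eq_zero_iff).1 h i (Finset.mem_univ i)
              have h1 : 0 ≤ w i := hwT.1.1 i
              show w i = 0
              omega
            · exact h
          have : (∑ i, ((u - w) i).toNat) + (∑ i, (w i).toNat) = ∑ i, (u i).toNat := by
            rw [← Finset.sum_add_distrib]
            exact Finset.sum_congr rfl fun i _ => hsum_split i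
          omega
        have hrec : u - w ∈ AddSubmonoid.closure M :=
          ih _ hsum (u - w) huw rfl
        have hwcl : w ∈ AddSubmonoid.closure M := AddSubmonoid.subset_closure hwMin
        have : w + (u - w) ∈ AddSubmonoid.closure M := AddSubmonoid.add_mem _ hwcl hrec
        simpa using this
  refine ⟨hMfin.toFinset, ?_, ?_⟩
  · intro u hu
    simp only [Set.Finite.coe_toFinset] at hu
    exact hMW hu
  · ext u
    simp only [Set.Finite.coe_toFinset, SetLike.mem_coe]
    constructor
    · intro hu
      exact hgen _ u hu rfl
    · intro hu
      refine AddSubmonoid.closure_induction (fun x hx => hMW hx) hW0 ?_ hu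
      intro x y _ _ hx hy
      constructor
      · intro i; exact add_nonneg (hx.1 i) (hy.1 i)
      · intro j
        have : ∑ i, ((x + y) i : ℚ) * v j i
            = (∑ i, (x i : ℚ) * v j i) + ∑ i, (y i : ℚ) * v j i := by
          rw [← Finset.sum_add_distrib]
          refine Finset.sum_congr rfl fun i _ => ?_
          simp [add_mul]
        rw [this, hx.2 j, hy.2 j, add_zero]
end
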